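/- arXiv:2006.16358 — 5 statements merged into one kernel-verified Lean document; each statement's English description precedes it below -/
import Mathlib

section
/- Let n ≥ 1 be an integer and let ψ : ℝ_+ → ℝ_+ be a function with ∑_{q=1}^∞ q^{n−1} ψ(q) < ∞. Then for any κ > 0, the n-dimensional Lebesgue measure of the set B_n(ψ,κ) of all ξ = (ξ_1,…,ξ_n) ∈ (0,1)^n such that |q_1ξ_1 + … + q_nξ_n + p| > κ ψ(|q|_∞) for every (p, q) ∈ ℤ × (ℤ^n \ {0}) is at least 1 − 4nκ ∑_{q=1}^∞ (2q+1)^{n−1} ψ(q). -/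
open MeasureTheory MeasureTheory.Measure Set
open scoped ENNReal NNReal

lemma round_nearest (x : ℝ) (k : ℤ) : |x - round x| ≤ |x - k| := by
  rcases le_or_gt (1/2 : ℝ) |x - k| with h | h
  · exact (abs_sub_round x).trans h
  · have : round (x - k + k) = round ((x:ℝ) - k) + k := round_add_intCast _ _
    have h0 : round ((x:ℝ) - k) = 0 := by
      rw [round_eq_zero_iff]
      constructor
      · nlinarith [abs_lt.mp h]
      · nlinarith [abs_lt.mp h]
    have : round x = k := by
      have := round_add_intCast ((x:ℝ) - k) k
      rw [h0] at this
      simpa using this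
    simp [this]

lemma exists_int_iff_norm (x : ℝ) (δ : ℝ) :
    (∃ p : ℤ, |x + p| ≤ δ) ↔ ‖(x : AddCircle (1:ℝ))‖ ≤ δ := by
  rw [UnitAddCircle.norm_eq]
  constructor
  · rintro ⟨p, hp⟩
    refine le_trans ?_ hp
    simpa [sub_neg_eq_add] using round_nearest x (-p)
  · intro h
    exact ⟨-round x, by simpa [sub_eq_add_neg] using h⟩

lemma oneDim (m : ℤ) (hm : m ≠ 0) (c δ : ℝ) :
    volume {t : ℝ | t ∈ Set.Ioo (0:ℝ) 1 ∧ ∃ p : ℤ, |(m:ℝ) * t + c + p| ≤ δ} ≤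
      ENNReal.ofReal (2*δ) := by
  haveI : Fact ((0:ℝ) < 1) := ⟨one_pos⟩
  set f : ℝ → AddCircle (1:ℝ) := fun t => (((m:ℝ) * t + c : ℝ) : AddCircle (1:ℝ)) with hf_def
  have hf : MeasurePreserving f (volume.restrict (Set.Ioc 0 1)) volume := by
    have h1 : MeasurePreserving ((↑) : ℝ → AddCircle (1:ℝ))
        (volume.restrict (Set.Ioc 0 1)) volume := by
      simpa using AddCircle.measurePreserving_mk 1 0
    have h2 := (MeasureTheory.measurePreserving_add_right
        (volume : Measure (AddCircle (1:ℝ))) ((c : ℝ) : AddCircle (1:ℝ))).comp ((measurePreserving_zsmul volume hm).comp h1)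
    convert h2 using 1
    funext t
    show (((m:ℝ) * t + c : ℝ) : AddCircle (1:ℝ)) = m • ((t : ℝ) : AddCircle (1:ℝ)) + ((c:ℝ) : AddCircle (1:ℝ))
    rw [← QuotientAddGroup.mk_zsmul, ← QuotientAddGroup.mk_add, zsmul_eq_mul]
  have hsub : {t : ℝ | t ∈ Set.Ioo (0:ℝ) 1 ∧ ∃ p : ℤ, |(m:ℝ) * t + c + p| ≤ δ} ⊆
      f ⁻¹' (Metric.closedBall 0 δ) ∩ Set.Ioc 0 1 := by
    rintro t ⟨ht, p, hp⟩
    refine ⟨?_, Set.Ioo_subset_Ioc_self ht⟩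
    simp only [Set.mem_preimage, Metric.mem_closedBall, dist_zero_right]
    exact (exists_int_iff_norm _ δ).mp ⟨p, hp⟩
  calc volume {t : ℝ | t ∈ Set.Ioo (0:ℝ) 1 ∧ ∃ p : ℤ, |(m:ℝ) * t + c + p| ≤ δ}
      ≤ volume (f ⁻¹' (Metric.closedBall 0 δ) ∩ Set.Ioc 0 1) := measure_mono hsub
    _ = (volume.restrict (Set.Ioc 0 1)) (f ⁻¹' (Metric.closedBall 0 δ)) := by
        rw [Measure.restrict_apply (hf.measurable measurableSet_closedBall)]
    _ = volume (Metric.closedBall (0 : AddCircle (1:ℝ)) δ) :=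
        hf.measure_preimage measurableSet_closedBall.nullMeasurableSet
    _ ≤ ENNReal.ofReal (2*δ) := by
        rw [AddCircle.volume_closedBall]
        exact ENNReal.ofReal_le_ofReal (min_le_right _ _)

lemma slab {m : ℕ} (q : Fin (m+1) → ℤ) (i₀ : Fin (m+1)) (hq : q i₀ ≠ 0) (δ : ℝ) :
    volume {ξ : Fin (m+1) → ℝ | (∀ i, ξ i ∈ Set.Ioo (0:ℝ) 1) ∧
      ∃ p : ℤ, |∑ i, (q i : ℝ) * ξ i + (p:ℝ)| ≤ δ} ≤ ENNReal.ofReal (2*δ) := by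
  set e := MeasurableEquiv.piFinSuccAbove (fun _ : Fin (m+1) => ℝ) i₀ with he
  have hmp := volume_preserving_piFinSuccAbove (fun _ : Fin (m+1) => ℝ) i₀
  set T : Set (ℝ × (Fin m → ℝ)) := {xy | ((xy.1 ∈ Set.Ioo (0:ℝ) 1 ∧ ∀ j, xy.2 j ∈ Set.Ioo (0:ℝ) 1)) ∧
      ∃ p : ℤ, |(q i₀ : ℝ) * xy.1 + (∑ j, (q (i₀.succAbove j) : ℝ) * xy.2 j) + (p:ℝ)| ≤ δ} with hT
  have hmeas : ∀ p : ℤ, Measurable fun xy : ℝ × (Fin m → ℝ) =>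
      (q i₀ : ℝ) * xy.1 + (∑ j, (q (i₀.succAbove j) : ℝ) * xy.2 j) + (p:ℝ) := by
    intro p
    apply Measurable.add_const
    exact (measurable_fst.const_mul _).add
      (Finset.measurable_sum Finset.univ fun j _ => ((measurable_pi_apply j).comp measurable_snd).const_mul _)
  have hTm : MeasurableSet T := by
    have h1 : MeasurableSet {xy : ℝ × (Fin m → ℝ) | xy.1 ∈ Set.Ioo (0:ℝ) 1} :=
      measurable_fst measurableSet_Ioo
    have h2 : MeasurableSet {xy : ℝ × (Fin m → ℝ) | ∀ j, xy.2 j ∈ Set.Ioo (0:ℝ) 1} := by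
      rw [Set.setOf_forall]
      exact MeasurableSet.iInter fun j =>
        ((measurable_pi_apply j).comp measurable_snd) measurableSet_Ioo
    have h3 : MeasurableSet {xy : ℝ × (Fin m → ℝ) | ∃ p : ℤ,
        |(q i₀ : ℝ) * xy.1 + (∑ j, (q (i₀.succAbove j) : ℝ) * xy.2 j) + (p:ℝ)| ≤ δ} := by
      rw [Set.setOf_exists]
      exact MeasurableSet.iUnion fun p => (hmeas p).abs measurableSet_Iic
    exact (h1.inter h2).inter h3
  have hSeq : {ξ : Fin (m+1) → ℝ | (∀ i, ξ i ∈ Set.Ioo (0:ℝ) 1) ∧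
      ∃ p : ℤ, |∑ i, (q i : ℝ) * ξ i + (p:ℝ)| ≤ δ} = e ⁻¹' T := by
    ext ξ
    have happ : e ξ = (ξ i₀, fun j => ξ (i₀.succAbove j)) := rfl
    simp only [Set.mem_preimage, happ, hT, Set.mem_setOf_eq]
    constructor
    · rintro ⟨h1, p, hp⟩
      refine ⟨⟨h1 i₀, fun j => h1 _⟩, p, ?_⟩
      rwa [Fin.sum_univ_succAbove (fun i => (q i : ℝ) * ξ i) i₀] at hp
    · rintro ⟨⟨h1, h2⟩, p, hp⟩
      refine ⟨fun i => ?_, p, ?_⟩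
      · exact (Fin.forall_iff_succAbove (P := fun i => ξ i ∈ Set.Ioo (0:ℝ) 1) i₀).mpr ⟨h1, h2⟩ i
      · rwa [Fin.sum_univ_succAbove (fun i => (q i : ℝ) * ξ i) i₀]
  rw [hSeq, hmp.measure_preimage hTm.nullMeasurableSet]
  rw [show (volume : Measure (ℝ × (Fin m → ℝ))) = (volume : Measure ℝ).prod volume from volume_eq_prod _ _,
    Measure.prod_apply_symm hTm]
  have hbound : ∀ y : Fin m → ℝ, volume ((fun x => (x, y)) ⁻¹' T) ≤
      (Set.univ.pi fun _ : Fin m => Set.Ioo (0:ℝ) 1).indicator (fun _ => ENNReal.ofReal (2*δ)) y := by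
    intro y
    by_cases hy : ∀ j, y j ∈ Set.Ioo (0:ℝ) 1
    · rw [Set.indicator_of_mem (by simpa [Set.mem_pi] using hy)]
      refine le_trans (measure_mono ?_) (oneDim (q i₀) hq (∑ j, (q (i₀.succAbove j) : ℝ) * y j) δ)
      rintro x ⟨⟨hx, -⟩, p, hp⟩
      exact ⟨hx, p, hp⟩
    · have : (fun x => (x, y)) ⁻¹' T = ∅ := by
        ext x; simp only [Set.mem_preimage, hT, Set.mem_setOf_eq, Set.mem_empty_iff_false, iff_false]
        rintro ⟨⟨-, h2⟩, -⟩; exact hy h2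
      simp [this]
  calc ∫⁻ y, volume ((fun x => (x, y)) ⁻¹' T) ∂(volume : Measure (Fin m → ℝ))
      ≤ ∫⁻ y, (Set.univ.pi fun _ : Fin m => Set.Ioo (0:ℝ) 1).indicator
          (fun _ => ENNReal.ofReal (2*δ)) y ∂volume := lintegral_mono hbound
    _ = ENNReal.ofReal (2*δ) * volume (Set.univ.pi fun _ : Fin m => Set.Ioo (0:ℝ) 1) := by
        rw [lintegral_indicator (MeasurableSet.univ_pi fun _ => measurableSet_Ioo)]
        simp
    _ ≤ ENNReal.ofReal (2*δ) := by
        rw [volume_pi_pi]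
        simp [Real.volume_Ioo]

lemma pow_add_le_aux (b d k : ℕ) : (b+d)^(k+1) ≤ b^(k+1) + (k+1)*d*(b+d)^k := by
  induction k with
  | zero => simp
  | succ k ih =>
    have hb : b^(k+1) ≤ (b+d)^(k+1) := Nat.pow_le_pow_left (Nat.le_add_right b d) _
    calc (b+d)^(k+1+1) = (b+d) * (b+d)^(k+1) := by ring
      _ ≤ (b+d) * (b^(k+1) + (k+1)*d*(b+d)^k) := Nat.mul_le_mul_left _ ih
      _ = b*b^(k+1) + d*b^(k+1) + (k+1)*d*((b+d)*(b+d)^k) := by ring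
      _ = b^(k+1+1) + d*b^(k+1) + (k+1)*d*(b+d)^(k+1) := by ring
      _ ≤ b^(k+1+1) + d*(b+d)^(k+1) + (k+1)*d*(b+d)^(k+1) := by
          have := Nat.mul_le_mul_left d hb; omega
      _ = b^(k+1+1) + (k+1+1)*d*(b+d)^(k+1) := by ring

def Nsup {n : ℕ} (q : Fin n → ℤ) : ℕ := Finset.univ.sup fun i => (q i).natAbs

lemma norm_eq_Nsup {n : ℕ} (q : Fin n → ℤ) : ‖q‖ = (Nsup q : ℝ) := by
  have hpt : ∀ i, ‖q i‖₊ = (((q i).natAbs : ℕ) : NNReal) := by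
    intro i
    ext
    simp [Int.norm_eq_abs, Nat.cast_natAbs]
  have hc := Finset.comp_sup_eq_sup_comp (s := (Finset.univ : Finset (Fin n)))
    (f := fun i => (q i).natAbs) (fun k : ℕ => (k : NNReal))
    (fun x y => by simp [Nat.cast_max]) (by simp)
  have key : (Finset.univ.sup fun i => ‖q i‖₊) = ((Nsup q : ℕ) : NNReal) := by
    rw [Nsup]
    rw [show (((Finset.univ.sup fun i => (q i).natAbs : ℕ)) : NNReal) =
      Finset.univ.sup ((fun k : ℕ => (k : NNReal)) ∘ fun i => (q i).natAbs) from hc]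
    exact Finset.sup_congr rfl fun i _ => hpt i
  rw [Pi.norm_def, key]
  simp

lemma fiber_finite {n : ℕ} (Q : ℕ) : {q : Fin n → ℤ | Nsup q = Q}.Finite := by
  apply Set.Finite.subset (Set.Finite.pi (fun i : Fin n => Set.finite_Icc (-(Q:ℤ)) Q))
  intro q hq
  simp only [Set.mem_setOf_eq] at hq
  intro i _
  have : (q i).natAbs ≤ Q := hq ▸ Finset.le_sup (f := fun i => (q i).natAbs) (Finset.mem_univ i)
  simp only [Set.mem_Icc]
  omega

lemma Nsup_eq_zero {n : ℕ} {q : Fin n → ℤ} (h : Nsup q = 0) : q = 0 := by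
  funext i
  have : (q i).natAbs ≤ 0 := h ▸ Finset.le_sup (f := fun i => (q i).natAbs) (Finset.mem_univ i)
  simpa using by omega
  
lemma fiber_card_le (m Q : ℕ) :
    (fiber_finite (n := m+1) (Q+1)).toFinset.card ≤ 2*(m+1)*(2*(Q+1)+1)^m := by
  classical
  set big := Fintype.piFinset (fun _ : Fin (m+1) => Finset.Icc (-(Q+1:ℤ)) (Q+1)) with hbig
  set small := Fintype.piFinset (fun _ : Fin (m+1) => Finset.Icc (-(Q:ℤ)) Q) with hsmall
  have hsub : (fiber_finite (n := m+1) (Q+1)).toFinset ⊆ big \ small := by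
    intro q hq
    rw [Set.Finite.mem_toFinset, Set.mem_setOf_eq] at hq
    rw [Finset.mem_sdiff]
    constructor
    · rw [Fintype.mem_piFinset]
      intro i
      have : (q i).natAbs ≤ Q + 1 := hq ▸ Finset.le_sup (f := fun i => (q i).natAbs) (Finset.mem_univ i)
      simp only [Finset.mem_Icc]; omega
    · intro hmem
      rw [Fintype.mem_piFinset] at hmem
      have : Nsup q ≤ Q := by
        apply Finset.sup_le
        intro i _
        have := hmem i
        simp only [Finset.mem_Icc] at this
        omega
      omega
  have hss : small ⊆ big := by
    intro q hq
    rw [Fintype.mem_piFinset] at hq ⊢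
    intro i
    have := hq i
    simp only [Finset.mem_Icc] at this ⊢
    omega
  have hcard := Finset.card_le_card hsub
  rw [Finset.card_sdiff_of_subset hss] at hcard
  have hbigc : big.card = (2*(Q+1)+1)^(m+1) := by
    rw [hbig, Fintype.card_piFinset]
    simp [Int.card_Icc]
    congr 1
    omega
  have hsmallc : small.card = (2*Q+1)^(m+1) := by
    rw [hsmall, Fintype.card_piFinset]
    simp [Int.card_Icc]
    congr 1
    omega
  rw [hbigc, hsmallc] at hcard
  have hp := pow_add_le_aux (2*Q+1) 2 m
  have he : 2*Q+1+2 = 2*(Q+1)+1 := by omega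
  rw [he] at hp
  have hcm : (m+1)*2*(2*(Q+1)+1)^m = 2*(m+1)*(2*(Q+1)+1)^m := by ring
  omega

/-- (Effective convergence Khintchine–Groshev for one linear form.)
If `∑_{q≥1} q^(n-1) ψ(q) < ∞` then for any `κ > 0` the Lebesgue measure of the set of
`ξ ∈ (0,1)^n` with `|q₁ξ₁ + ⋯ + qₙξₙ + p| > κ ψ(|q|_∞)` for all `(p, q) ∈ ℤ × (ℤⁿ \ {0})`
is at least `1 - 4 n κ ∑_{q≥1} (2q+1)^(n-1) ψ(q)`. -/
theorem stmt1 (n : ℕ) (hn : 1 ≤ n) (ψ : ℝ → ℝ) (hψ : ∀ x : ℝ, 0 ≤ x → 0 ≤ ψ x)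
    (hsum : Summable fun q : ℕ => ((q + 1 : ℕ) : ℝ) ^ (n - 1) * ψ ((q + 1 : ℕ) : ℝ))
    (κ : ℝ) (hκ : 0 < κ) :
    ENNReal.ofReal
        (1 - 4 * n * κ *
          ∑' q : ℕ, ((2 * (q + 1) + 1 : ℕ) : ℝ) ^ (n - 1) * ψ ((q + 1 : ℕ) : ℝ)) ≤
      volume {ξ : Fin n → ℝ |
        (∀ i, ξ i ∈ Set.Ioo (0 : ℝ) 1) ∧
        ∀ (p : ℤ) (q : Fin n → ℤ), q ≠ 0 →
          κ * ψ ‖q‖ < |∑ i, (q i : ℝ) * ξ i + (p : ℝ)|} := by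
  classical
  obtain ⟨m, rfl⟩ : ∃ m, n = m + 1 := ⟨n - 1, by omega⟩
  simp only [Nat.add_sub_cancel] at hsum ⊢
  set T : ℝ := ∑' q : ℕ, ((2 * (q + 1) + 1 : ℕ) : ℝ) ^ m * ψ ((q + 1 : ℕ) : ℝ) with hT
  set G := {ξ : Fin (m+1) → ℝ |
        (∀ i, ξ i ∈ Set.Ioo (0 : ℝ) 1) ∧
        ∀ (p : ℤ) (q : Fin (m+1) → ℤ), q ≠ 0 →
          κ * ψ ‖q‖ < |∑ i, (q i : ℝ) * ξ i + (p : ℝ)|} with hG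
  set C : (Fin (m+1) → ℤ) → Set (Fin (m+1) → ℝ) := fun q =>
    if q = 0 then ∅ else {ξ : Fin (m+1) → ℝ | (∀ i, ξ i ∈ Set.Ioo (0:ℝ) 1) ∧
      ∃ p : ℤ, |∑ i, (q i : ℝ) * ξ i + (p:ℝ)| ≤ κ * ψ ((Nsup q : ℕ) : ℝ)} with hC
  set f : (Fin (m+1) → ℤ) → ℝ≥0∞ := fun q =>
    if q = 0 then 0 else ENNReal.ofReal (2 * (κ * ψ ((Nsup q : ℕ) : ℝ))) with hf
  have hψn : ∀ k : ℕ, 0 ≤ ψ (k : ℝ) := fun k => hψ _ (Nat.cast_nonneg k)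
  -- covering
  have hcover : (Set.univ.pi fun _ : Fin (m+1) => Set.Ioo (0:ℝ) 1) ⊆ G ∪ ⋃ q, C q := by
    intro ξ hξ
    rw [Set.mem_pi] at hξ
    have hbox : ∀ i, ξ i ∈ Set.Ioo (0:ℝ) 1 := fun i => hξ i (Set.mem_univ i)
    by_cases hGm : ξ ∈ G
    · exact Or.inl hGm
    · right
      rw [hG, Set.mem_setOf_eq] at hGm
      push_neg at hGm
      obtain ⟨p, q, hq0, hle⟩ := hGm hbox
      refine Set.mem_iUnion.mpr ⟨q, ?_⟩
      rw [hC]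
      simp only [if_neg hq0]
      refine ⟨hbox, p, ?_⟩
      rwa [← norm_eq_Nsup]
  -- volume of C q
  have hCvol : ∀ q, volume (C q) ≤ f q := by
    intro q
    by_cases h0 : q = 0
    · simp [hC, hf, h0]
    · rw [hC, hf]
      simp only [if_neg h0]
      obtain ⟨i₀, hi₀⟩ := Function.ne_iff.mp h0
      exact slab q i₀ (by simpa using hi₀) _
  -- summability facts
  have hsum3 : Summable (fun k : ℕ => ((2 * (k + 1) + 1 : ℕ) : ℝ) ^ m * ψ ((k + 1 : ℕ) : ℝ)) := by
    refine Summable.of_nonneg_of_le (fun k => ?_) (fun k => ?_) (hsum.mul_left ((3:ℝ)^m))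
    · have := hψn (k+1); positivity
    · have h1 : ((2 * (k + 1) + 1 : ℕ) : ℝ) ≤ 3 * ((k + 1 : ℕ) : ℝ) := by push_cast; linarith
      have h2 : (0:ℝ) ≤ ((2 * (k + 1) + 1 : ℕ) : ℝ) := by positivity
      calc ((2 * (k + 1) + 1 : ℕ) : ℝ) ^ m * ψ ((k + 1 : ℕ) : ℝ)
          ≤ (3 * ((k + 1 : ℕ) : ℝ)) ^ m * ψ ((k + 1 : ℕ) : ℝ) := by
            apply mul_le_mul_of_nonneg_right (pow_le_pow_left₀ h2 h1 m) (hψn (k+1))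
        _ = (3:ℝ)^m * (((k + 1 : ℕ) : ℝ) ^ m * ψ ((k + 1 : ℕ) : ℝ)) := by ring
  have hT0 : 0 ≤ T := by
    rw [hT]
    apply tsum_nonneg
    intro k
    have := hψn (k+1)
    positivity
  -- the tsum bound
  have hX : ∑' q : Fin (m+1) → ℤ, f q ≤ ENNReal.ofReal (4 * ((m+1 : ℕ) : ℝ) * κ * T) := by
    set g : ℕ → ℝ≥0∞ := fun Q => ∑' (x : {q : Fin (m+1) → ℤ // Nsup q = Q}), f x.val with hg
    have hsig : ∑' q : Fin (m+1) → ℤ, f q = ∑' Q : ℕ, g Q := by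
      rw [← (Equiv.sigmaFiberEquiv (Nsup : (Fin (m+1) → ℤ) → ℕ)).tsum_eq f,
        ENNReal.tsum_sigma']
      exact tsum_congr fun a => tsum_congr fun b => rfl
    have inner0 : g 0 = 0 := by
      rw [hg, ENNReal.tsum_eq_zero]
      rintro ⟨x, hx⟩
      rw [hf]
      simp [Nsup_eq_zero hx]
    have innerQ : ∀ Q : ℕ, g (Q+1) ≤
        ENNReal.ofReal (4 * ((m+1:ℕ):ℝ) * (((2*(Q+1)+1 : ℕ):ℝ))^m * (κ * ψ ((Q+1 : ℕ) : ℝ))) := by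
      intro Q
      have hfs := fiber_finite (n := m+1) (Q+1)
      have htset : (∑' (x : {q : Fin (m+1) → ℤ // Nsup q = Q+1}), f x.val) =
          ∑ q ∈ hfs.toFinset, f q := by
        refine (tsum_subtype {q : Fin (m+1) → ℤ | Nsup q = Q+1} f).trans ?_
        rw [tsum_eq_sum (s := hfs.toFinset) (fun b hb => Set.indicator_of_notMem
          (by simpa [Set.Finite.mem_toFinset] using hb) f)]
        exact Finset.sum_congr rfl fun b hb => Set.indicator_of_mem
          (by simpa [Set.Finite.mem_toFinset] using hb) f
      have hterm : ∀ x ∈ hfs.toFinset, f x ≤ ENNReal.ofReal (2 * (κ * ψ ((Q+1:ℕ):ℝ))) := by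
        intro x hxm
        have hx : Nsup x = Q + 1 := by simpa [Set.Finite.mem_toFinset] using hxm
        rw [hf]
        have hx0 : x ≠ 0 := by
          intro h; rw [h] at hx
          have : Nsup (0 : Fin (m+1) → ℤ) = 0 := by simp [Nsup]
          omega
        simp only [if_neg hx0, hx]
        exact le_rfl
      have hcard : hfs.toFinset.card ≤ 2*(m+1)*(2*(Q+1)+1)^m := fiber_card_le m Q
      calc (∑' (x : {q : Fin (m+1) → ℤ // Nsup q = Q+1}), f x.val)
          = ∑ q ∈ hfs.toFinset, f q := htset
        _ ≤ hfs.toFinset.card • ENNReal.ofReal (2 * (κ * ψ ((Q+1:ℕ):ℝ))) :=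
            Finset.sum_le_card_nsmul _ _ _ hterm
        _ ≤ (2*(m+1)*(2*(Q+1)+1)^m) • ENNReal.ofReal (2 * (κ * ψ ((Q+1:ℕ):ℝ))) :=
            nsmul_le_nsmul_left (by positivity) hcard
        _ = ((2*(m+1)*(2*(Q+1)+1)^m : ℕ) : ℝ≥0∞) *
            ENNReal.ofReal (2 * (κ * ψ ((Q+1:ℕ):ℝ))) := by rw [nsmul_eq_mul]
        _ ≤ ENNReal.ofReal (4 * ((m+1:ℕ):ℝ) * (((2*(Q+1)+1 : ℕ):ℝ))^m * (κ * ψ ((Q+1:ℕ):ℝ))) := by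
            rw [← ENNReal.ofReal_natCast, ← ENNReal.ofReal_mul (by positivity)]
            apply ENNReal.ofReal_le_ofReal
            apply le_of_eq
            push_cast
            ring
    rw [hsig, tsum_eq_zero_add' (f := g) ENNReal.summable, inner0, zero_add]
    calc ∑' (Q : ℕ), g (Q+1)
        ≤ ∑' (Q : ℕ), ENNReal.ofReal
            (4 * ((m+1:ℕ):ℝ) * (((2*(Q+1)+1 : ℕ):ℝ))^m * (κ * ψ ((Q+1 : ℕ) : ℝ))) :=
          ENNReal.tsum_le_tsum innerQ
      _ = ENNReal.ofReal (∑' (Q : ℕ),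
            4 * ((m+1:ℕ):ℝ) * (((2*(Q+1)+1 : ℕ):ℝ))^m * (κ * ψ ((Q+1 : ℕ) : ℝ))) := by
          rw [ENNReal.ofReal_tsum_of_nonneg]
          · intro Q; have := hψn (Q+1); positivity
          · have h4 := hsum3.mul_left (4 * ((m+1:ℕ):ℝ) * κ)
            apply h4.congr
            intro Q
            push_cast
            ring
      _ = ENNReal.ofReal (4 * ((m+1 : ℕ) : ℝ) * κ * T) := by
          congr 1
          rw [hT, ← tsum_mul_left]
          apply tsum_congr
          intro Q
          ring
  -- final chain
  have hbox1 : volume (Set.univ.pi fun _ : Fin (m+1) => Set.Ioo (0:ℝ) 1) = 1 := by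
    rw [volume_pi_pi]
    simp
  have h1 : (1 : ℝ≥0∞) ≤ volume G + ENNReal.ofReal (4 * ((m+1:ℕ):ℝ) * κ * T) := by
    calc (1 : ℝ≥0∞) = volume (Set.univ.pi fun _ : Fin (m+1) => Set.Ioo (0:ℝ) 1) := hbox1.symm
      _ ≤ volume (G ∪ ⋃ q, C q) := measure_mono hcover
      _ ≤ volume G + volume (⋃ q, C q) := measure_union_le _ _
      _ ≤ volume G + ∑' q, volume (C q) := add_le_add_right (measure_iUnion_le _) _
      _ ≤ volume G + ∑' q, f q := add_le_add_right (ENNReal.tsum_le_tsum hCvol) _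
      _ ≤ volume G + ENNReal.ofReal (4 * ((m+1:ℕ):ℝ) * κ * T) := add_le_add_right hX _
  have ha : (0:ℝ) ≤ 4 * ((m+1:ℕ):ℝ) * κ * T := by positivity
  have hcoef : 4 * ((m+1:ℕ):ℝ) * κ * T = 4 * (↑(m+1):ℝ) * κ * T := rfl
  calc ENNReal.ofReal (1 - 4 * (↑(m+1):ℝ) * κ * T)
      = ENNReal.ofReal 1 - ENNReal.ofReal (4 * ((m+1:ℕ):ℝ) * κ * T) := by
        rw [← ENNReal.ofReal_sub _ ha]
    _ ≤ volume G := by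
        rw [ENNReal.ofReal_one]
        exact tsub_le_iff_right.mpr h1
end

section
/- Let n, m ≥ 1 be integers and let ψ : ℝ_+ → ℝ_+ be a function such that ∑_{q=1}^∞ q^{n−1} ψ(q)^m < ∞. Then for Lebesgue-almost every n×m real matrix Ξ with column vectors ξ_1,…,ξ_m ∈ ℝ^n there exists a constant κ(Ξ) > 0 such that max_{1≤j≤m} |q_1ξ_{1,j} + … + q_nξ_{n,j} + p_j| > κ(Ξ) ψ(|q|_∞) for all (p, q) ∈ ℤ^m × (ℤ^n \ {0}). -/
open scoped ENNReal NNReal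
open MeasureTheory Finset

private lemma slab_vol {n m : ℕ} (q : Fin n → ℤ) (i0 : Fin n) (hq : q i0 ≠ 0)
    (p : Fin m → ℝ) (ε T : ℝ) (hε : 0 ≤ ε) (hT : 0 ≤ T) :
    volume {Ξ : Fin n → Fin m → ℝ |
        (∀ j, |∑ i, (q i : ℝ) * Ξ i j + p j| ≤ ε) ∧ ∀ i j, |Ξ i j| ≤ T}
      ≤ ENNReal.ofReal ((2 * ε / |(q i0 : ℝ)|) ^ m * (2 * T) ^ ((n - 1) * m)) := by
  classical
  set M : Matrix (Fin n) (Fin n) ℝ := Matrix.updateRow 1 i0 (fun i => (q i : ℝ)) with hM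
  have hdetM : M.det = (q i0 : ℝ) := by
    have h1 := Matrix.updateRow_transpose (M := (1 : Matrix (Fin n) (Fin n) ℝ))
      (j := i0) (c := fun i => (q i : ℝ))
    rw [Matrix.transpose_one] at h1
    rw [hM, h1, Matrix.det_transpose, ← Matrix.cramer_apply, Matrix.cramer_one]
    simp
  set N := Matrix.kroneckerMap (· * ·) M (1 : Matrix (Fin m) (Fin m) ℝ) with hN
  have hdetN : N.det = (q i0 : ℝ) ^ m := by
    rw [hN, Matrix.det_kronecker, hdetM, Matrix.det_one, one_pow, mul_one, Fintype.card_fin]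
  let φ : ((Fin n × Fin m) → ℝ) ≃ₗ[ℝ] (Fin n → Fin m → ℝ) :=
    { toFun := fun x i j => x (i, j)
      invFun := fun Ξ ij => Ξ ij.1 ij.2
      map_add' := fun _ _ => rfl
      map_smul' := fun _ _ => rfl
      left_inv := fun x => rfl
      right_inv := fun Ξ => rfl }
  set G : (Fin n → Fin m → ℝ) →ₗ[ℝ] (Fin n → Fin m → ℝ) := φ.conj (Matrix.toLin' N) with hG
  have hdetG : LinearMap.det G = (q i0 : ℝ) ^ m := by
    rw [hG, LinearEquiv.conj_apply, LinearMap.comp_assoc, LinearMap.det_conj, LinearMap.det_toLin', hdetN]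
  have hGapp : ∀ (Ξ : Fin n → Fin m → ℝ) (i : Fin n) (j : Fin m),
      G Ξ i j = if i = i0 then ∑ i', (q i' : ℝ) * Ξ i' j else Ξ i j := by
    intro Ξ i j
    show (Matrix.toLin' N) (fun ij => Ξ ij.1 ij.2) (i, j) = _
    rw [Matrix.toLin'_apply]
    show ∑ ij : Fin n × Fin m, N (i, j) ij * Ξ ij.1 ij.2 = _
    rw [Fintype.sum_prod_type]
    have h2 : ∀ i' : Fin n, ∑ j' : Fin m, N (i, j) (i', j') * Ξ i' j' = M i i' * Ξ i' j := by
      intro i'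
      simp [hN, Matrix.kroneckerMap_apply, Matrix.one_apply, mul_ite, ite_mul,
        Finset.sum_ite_eq]
    rw [Finset.sum_congr rfl fun i' _ => h2 i']
    by_cases h : i = i0
    · subst h
      rw [if_pos rfl]
      exact Finset.sum_congr rfl fun i' _ => by rw [hM, Matrix.updateRow_self]
    · rw [if_neg h]
      have h3 : ∀ i', M i i' = if i = i' then 1 else 0 := by
        intro i'
        rw [hM, Matrix.updateRow_ne h, Matrix.one_apply]
      simp [h3, ite_mul, Finset.sum_ite_eq]
  set B : Set (Fin n → Fin m → ℝ) := Set.pi Set.univ fun k =>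
    if k = i0 then Set.pi Set.univ fun j => Set.Icc (-(p j) - ε) (-(p j) + ε)
    else Set.pi Set.univ fun j => Set.Icc (-T) T with hB
  have hsub : {Ξ : Fin n → Fin m → ℝ |
      (∀ j, |∑ i, (q i : ℝ) * Ξ i j + p j| ≤ ε) ∧ ∀ i j, |Ξ i j| ≤ T} ⊆ ⇑G ⁻¹' B := by
    rintro Ξ ⟨h1, h2⟩
    intro k _
    simp only [hB]
    split_ifs with hk
    · subst hk
      intro j _
      rw [hGapp, if_pos rfl]
      have := abs_le.1 (h1 j)
      constructor <;> linarith [this.1, this.2]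
    · intro j _
      rw [hGapp, if_neg hk]
      exact abs_le.1 (h2 k j)
  have hq' : |(q i0 : ℝ)| ≠ 0 := by
    simp [abs_eq_zero, hq]
  have hq0 : (0:ℝ) < |(q i0 : ℝ)| := lt_of_le_of_ne (abs_nonneg _) (Ne.symm hq')
  have hdet_ne : LinearMap.det G ≠ 0 := by
    rw [hdetG]
    exact pow_ne_zero _ (by exact_mod_cast hq)
  have hBvol : volume B = ENNReal.ofReal ((2 * ε) ^ m) *
      ENNReal.ofReal ((2 * T) ^ ((n - 1) * m)) := by
    have hC : volume (Set.pi Set.univ fun j : Fin m =>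
        Set.Icc (-(p j) - ε) (-(p j) + ε)) = ENNReal.ofReal ((2 * ε) ^ m) := by
      rw [volume_pi_pi]
      have h4 : ∀ j : Fin m, volume (Set.Icc (-(p j) - ε) (-(p j) + ε))
          = ENNReal.ofReal (2 * ε) := by
        intro j
        rw [Real.volume_Icc]
        congr 1
        ring
      rw [Finset.prod_congr rfl fun j _ => h4 j, Finset.prod_const, card_univ,
        Fintype.card_fin, ← ENNReal.ofReal_pow (by linarith)]
    have hD : volume (Set.pi Set.univ fun _ : Fin m => Set.Icc (-T) T)
        = ENNReal.ofReal ((2 * T) ^ m) := by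
      rw [volume_pi_pi]
      have h4 : volume (Set.Icc (-T) T) = ENNReal.ofReal (2 * T) := by
        rw [Real.volume_Icc]; congr 1; ring
      rw [Finset.prod_congr rfl fun j _ => h4, Finset.prod_const, card_univ,
        Fintype.card_fin, ← ENNReal.ofReal_pow (by linarith)]
    rw [hB, volume_pi_pi, ← Finset.mul_prod_erase Finset.univ _ (Finset.mem_univ i0),
      if_pos rfl, hC]
    congr 1
    have h5 : ∀ k ∈ Finset.univ.erase i0,
        volume (if k = i0 then Set.pi Set.univ fun j : Fin m =>
            Set.Icc (-(p j) - ε) (-(p j) + ε)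
          else Set.pi Set.univ fun _ : Fin m => Set.Icc (-T) T)
        = ENNReal.ofReal ((2 * T) ^ m) := by
      intro k hk
      rw [if_neg (Finset.ne_of_mem_erase hk), hD]
    rw [Finset.prod_congr rfl h5, Finset.prod_const, Finset.card_erase_of_mem (mem_univ i0),
      card_univ, Fintype.card_fin, ← ENNReal.ofReal_pow (by positivity), ← pow_mul, mul_comm m]
  calc volume {Ξ : Fin n → Fin m → ℝ |
      (∀ j, |∑ i, (q i : ℝ) * Ξ i j + p j| ≤ ε) ∧ ∀ i j, |Ξ i j| ≤ T}
      ≤ volume (⇑G ⁻¹' B) := measure_mono hsub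
    _ = ENNReal.ofReal |(LinearMap.det G)⁻¹| * volume B :=
        Measure.addHaar_preimage_linearMap volume hdet_ne B
    _ = ENNReal.ofReal ((2 * ε / |(q i0 : ℝ)|) ^ m * (2 * T) ^ ((n - 1) * m)) := by
        rw [hBvol, hdetG, ← mul_assoc, ← ENNReal.ofReal_mul (abs_nonneg _),
          ← ENNReal.ofReal_mul (mul_nonneg (abs_nonneg _) (pow_nonneg (by linarith) m))]
        congr 1
        rw [abs_inv, abs_pow, div_pow]
        ring

private lemma Qn_pos {n : ℕ} {q : Fin n → ℤ} (hq : q ≠ 0) :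
    1 ≤ (univ.sup fun i => (q i).natAbs) := by
  by_contra h
  push_neg at h
  apply hq
  funext i
  have h2 : (q i).natAbs ≤ univ.sup fun i => (q i).natAbs :=
    Finset.le_sup (f := fun i => (q i).natAbs) (mem_univ i)
  simp only [Pi.zero_apply]
  exact Int.natAbs_eq_zero.mp (by omega)

private lemma abs_le_Qn {n : ℕ} (q : Fin n → ℤ) (i : Fin n) :
    |(q i : ℝ)| ≤ ((univ.sup fun i => (q i).natAbs : ℕ) : ℝ) := by
  have h2 : (q i).natAbs ≤ univ.sup fun i => (q i).natAbs :=
    Finset.le_sup (f := fun i => (q i).natAbs) (mem_univ i)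
  calc |(q i : ℝ)| = ((q i).natAbs : ℝ) := by
        rw [← Int.cast_abs, Int.abs_eq_natAbs, Int.cast_natCast]
    _ ≤ _ := by exact_mod_cast h2

private lemma norm_int_vec {n : ℕ} (q : Fin n → ℤ) :
    ‖q‖ = ((univ.sup fun i => (q i).natAbs : ℕ) : ℝ) := by
  have h1 : (univ.sup fun b => ‖q b‖₊) = ((univ.sup fun i => (q i).natAbs : ℕ) : NNReal) := by
    rw [Finset.comp_sup_eq_sup_comp (fun k : ℕ => (k : NNReal))
      (fun x y => by simp [Nat.cast_max]) (by simp)]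
    congr 1
    funext i
    simp [Function.comp, NNReal.natCast_natAbs]
  rw [Pi.norm_def, h1]
  norm_cast

private lemma sum_ne_top {n m : ℕ} (hn : 1 ≤ n) (hm : 1 ≤ m) (ψ : ℝ → ℝ)
    (hψ : ∀ x : ℝ, 0 ≤ x → 0 ≤ ψ x)
    (hsum : Summable fun q : ℕ => ((q + 1 : ℕ) : ℝ) ^ (n - 1) * ψ ((q + 1 : ℕ) : ℝ) ^ m)
    (T : ℕ) :
    ∑' e : (Fin m → ℤ) × (Fin n → ℤ),
      volume {Ξ : Fin n → Fin m → ℝ | e.2 ≠ 0 ∧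
        (∀ j, |∑ i, (e.2 i : ℝ) * Ξ i j + (e.1 j : ℝ)| ≤ ψ ‖e.2‖) ∧
        ∀ i j, |Ξ i j| ≤ (T : ℝ)} ≠ ⊤ := by
  classical
  haveI : Nonempty (Fin n) := ⟨⟨0, hn⟩⟩
  set Qn : (Fin n → ℤ) → ℕ := fun q => Finset.univ.sup fun i => (q i).natAbs with hQn
  set A : (Fin m → ℤ) × (Fin n → ℤ) → Set (Fin n → Fin m → ℝ) := fun e =>
    {Ξ : Fin n → Fin m → ℝ | e.2 ≠ 0 ∧
      (∀ j, |∑ i, (e.2 i : ℝ) * Ξ i j + (e.1 j : ℝ)| ≤ ψ ‖e.2‖) ∧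
      ∀ i j, |Ξ i j| ≤ (T : ℝ)} with hA
  -- uniform bound on ψ at positive integers
  obtain ⟨c, hc1, hcb⟩ : ∃ c : ℝ, 1 ≤ c ∧ ∀ k : ℕ, ψ ((k + 1 : ℕ) : ℝ) ≤ c := by
    refine ⟨max 1 (∑' k : ℕ, ((k + 1 : ℕ) : ℝ) ^ (n - 1) * ψ ((k + 1 : ℕ) : ℝ) ^ m),
      le_max_left _ _, fun k => ?_⟩
    have hψk : 0 ≤ ψ ((k + 1 : ℕ) : ℝ) := hψ _ (by positivity)
    have htnn : ∀ j : ℕ, 0 ≤ ((j + 1 : ℕ) : ℝ) ^ (n - 1) * ψ ((j + 1 : ℕ) : ℝ) ^ m :=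
      fun j => mul_nonneg (by positivity) (pow_nonneg (hψ _ (by positivity)) m)
    have hle := hsum.le_tsum k fun j _ => htnn j
    have hone : (1 : ℝ) ≤ ((k + 1 : ℕ) : ℝ) ^ (n - 1) :=
      one_le_pow₀ (by exact_mod_cast Nat.succ_le_succ (Nat.zero_le k))
    have h1 : ψ ((k + 1 : ℕ) : ℝ) ^ m ≤ ((k + 1 : ℕ) : ℝ) ^ (n - 1) * ψ ((k + 1 : ℕ) : ℝ) ^ m :=
      le_mul_of_one_le_left (pow_nonneg hψk m) hone
    by_cases hc' : ψ ((k + 1 : ℕ) : ℝ) ≤ 1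
    · exact le_trans hc' (le_max_left _ _)
    · push_neg at hc'
      have h2 : ψ ((k + 1 : ℕ) : ℝ) ≤ ψ ((k + 1 : ℕ) : ℝ) ^ m :=
        le_self_pow₀ (le_of_lt hc') (by omega)
      exact le_trans (le_trans h2 (le_trans h1 hle)) (le_max_right _ _)
  set c₂ : ℝ := 2 * c + 3 + 2 * n * T with hc₂
  have hc₂pos : (0 : ℝ) < c₂ := by positivity
  set κ₀ : ℝ := (2 * c₂) ^ m * (2 * (T : ℝ)) ^ ((n - 1) * m) with hκ₀
  have hκ₀nn : 0 ≤ κ₀ := by positivity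
  -- per-q bound
  have hqsum : ∀ q : Fin n → ℤ, q ≠ 0 →
      ∑' p : Fin m → ℤ, volume (A (p, q)) ≤
        ENNReal.ofReal (κ₀ * ψ ((Qn q : ℕ) : ℝ) ^ m) := by
    intro q hq0
    obtain ⟨i0, -, hi0⟩ := Finset.exists_mem_eq_sup (univ : Finset (Fin n))
      univ_nonempty (fun i => (q i).natAbs)
    have hi0' : Qn q = (q i0).natAbs := hi0
    have hQ1 : 1 ≤ Qn q := Qn_pos hq0
    have hQR : (1 : ℝ) ≤ ((Qn q : ℕ) : ℝ) := by exact_mod_cast hQ1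
    have hQpos : (0 : ℝ) < ((Qn q : ℕ) : ℝ) := by linarith
    have hnormq : ‖q‖ = ((Qn q : ℕ) : ℝ) := norm_int_vec q
    have habsi0 : |(q i0 : ℝ)| = ((Qn q : ℕ) : ℝ) := by
      rw [← Int.cast_abs, Int.abs_eq_natAbs, Int.cast_natCast, hi0']
    have hqi0 : q i0 ≠ 0 := by
      intro h
      rw [h] at hi0'
      simp only [Int.natAbs_zero] at hi0'
      omega
    set ε := ψ ((Qn q : ℕ) : ℝ) with hε
    have hεnn : 0 ≤ ε := hψ _ (by positivity)
    have hεc : ε ≤ c := by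
      have h3 := hcb (Qn q - 1)
      have h4 : Qn q - 1 + 1 = Qn q := by omega
      rwa [h4] at h3
    set b : ℤ := ⌈ε⌉ + n * (Qn q) * T with hb
    have hbnn : (0 : ℤ) ≤ b := by
      have : (0 : ℤ) ≤ ⌈ε⌉ := Int.ceil_nonneg hεnn
      positivity
    set P : Finset (Fin m → ℤ) := Fintype.piFinset fun _ => Finset.Icc (-b) b with hP
    set SB : ℝ≥0∞ := ENNReal.ofReal ((2 * ε / ((Qn q : ℕ) : ℝ)) ^ m *
      (2 * (T : ℝ)) ^ ((n - 1) * m)) with hSB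
    have hslab : ∀ p : Fin m → ℤ, volume (A (p, q)) ≤ SB := by
      intro p
      have h1 : A (p, q) ⊆ {Ξ : Fin n → Fin m → ℝ |
          (∀ j, |∑ i, (q i : ℝ) * Ξ i j + ((p j : ℤ) : ℝ)| ≤ ε) ∧
          ∀ i j, |Ξ i j| ≤ (T : ℝ)} := by
        rintro Ξ ⟨-, h2, h3⟩
        refine ⟨fun j => ?_, h3⟩
        have := h2 j
        rwa [hnormq] at this
      have h2 := slab_vol q i0 hqi0 (fun j => ((p j : ℤ) : ℝ)) ε (T : ℝ) hεnn (Nat.cast_nonneg T)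
      rw [habsi0] at h2
      exact le_trans (measure_mono h1) h2
    have hempty : ∀ p : Fin m → ℤ, p ∉ P → volume (A (p, q)) = 0 := by
      intro p hp
      have : A (p, q) = ∅ := by
        rw [Set.eq_empty_iff_forall_notMem]
        rintro Ξ ⟨-, h2, h3⟩
        apply hp
        rw [hP, Fintype.mem_piFinset]
        intro j
        rw [Finset.mem_Icc]
        have h5 := h2 j
        rw [hnormq] at h5
        have h6 : |(p j : ℝ)| ≤ |∑ i, (q i : ℝ) * Ξ i j + (p j : ℝ)| +
            |∑ i, (q i : ℝ) * Ξ i j| := by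
          have h6' := abs_sub (∑ i, (q i : ℝ) * Ξ i j + (p j : ℝ))
            (∑ i, (q i : ℝ) * Ξ i j)
          rwa [add_sub_cancel_left] at h6'
        have h7 : |∑ i, (q i : ℝ) * Ξ i j| ≤ (n : ℝ) * ((Qn q : ℕ) : ℝ) * T := by
          calc |∑ i, (q i : ℝ) * Ξ i j| ≤ ∑ i, |(q i : ℝ) * Ξ i j| :=
                Finset.abs_sum_le_sum_abs _ _
            _ ≤ ∑ _i : Fin n, ((Qn q : ℕ) : ℝ) * T := by
                refine Finset.sum_le_sum fun i _ => ?_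
                rw [abs_mul]
                exact mul_le_mul (abs_le_Qn q i) (h3 i j) (abs_nonneg _)
                  (Nat.cast_nonneg _)
            _ = (n : ℝ) * (((Qn q : ℕ) : ℝ) * T) := by
                rw [Finset.sum_const, card_univ, Fintype.card_fin, nsmul_eq_mul]
            _ = (n : ℝ) * ((Qn q : ℕ) : ℝ) * T := by ring
        have h8 : |(p j : ℝ)| ≤ (b : ℝ) := by
          have h9 : ε ≤ (⌈ε⌉ : ℝ) := Int.le_ceil ε
          have h10 : (b : ℝ) = (⌈ε⌉ : ℝ) + (n : ℝ) * ((Qn q : ℕ) : ℝ) * T := by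
            rw [hb]
            push_cast
            ring
          linarith
        have h11 : |p j| ≤ b := by
          have := h8
          rw [← Int.cast_abs] at this
          exact_mod_cast this
        exact abs_le.mp h11
      rw [this]
      exact measure_empty
  -- count of P
    have hIccCard : (((Finset.Icc (-b) b).card : ℕ) : ℝ) ≤ c₂ * ((Qn q : ℕ) : ℝ) := by
      rw [Int.card_Icc]
      have h12 : ((b + 1 - -b).toNat : ℝ) = ((2 * b + 1 : ℤ) : ℝ) := by
        have : b + 1 - -b = 2 * b + 1 := by ring
        rw [this]
        have h13 : (0 : ℤ) ≤ 2 * b + 1 := by omega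
        exact_mod_cast Int.toNat_of_nonneg h13
      rw [h12]
      have h9 : (⌈ε⌉ : ℝ) < ε + 1 := Int.ceil_lt_add_one ε
      have h14 : ((2 * b + 1 : ℤ) : ℝ) = 2 * (⌈ε⌉ : ℝ) +
          2 * (n : ℝ) * ((Qn q : ℕ) : ℝ) * T + 1 := by
        rw [hb]; push_cast; ring
      rw [h14, hc₂]
      have hT0 : (0 : ℝ) ≤ (T : ℝ) := Nat.cast_nonneg T
      have hn0 : (0 : ℝ) ≤ (n : ℝ) := Nat.cast_nonneg n
      nlinarith [hQR, hεc, hc1]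
    have hPcard : ((P.card : ℕ) : ℝ) = (((Finset.Icc (-b) b).card : ℕ) : ℝ) ^ m := by
      rw [hP, Fintype.card_piFinset, Finset.prod_const, card_univ, Fintype.card_fin]
      push_cast
      ring
    calc ∑' p : Fin m → ℤ, volume (A (p, q))
        ≤ ∑' p : Fin m → ℤ, (if p ∈ P then SB else 0) := by
          refine ENNReal.tsum_le_tsum fun p => ?_
          by_cases hp : p ∈ P
          · simpa [hp] using hslab p
          · simp [hp, hempty p hp]
      _ = ∑ p ∈ P, (if p ∈ P then SB else 0) := tsum_eq_sum (fun p hp => by simp [hp])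
      _ = P.card • SB := by
          rw [Finset.sum_congr rfl fun p hp => if_pos hp, Finset.sum_const]
      _ = (P.card : ℝ≥0∞) * SB := by rw [nsmul_eq_mul]
      _ ≤ ENNReal.ofReal (κ₀ * ψ ((Qn q : ℕ) : ℝ) ^ m) := by
          rw [hSB, ← ENNReal.ofReal_natCast P.card,
            ← ENNReal.ofReal_mul (Nat.cast_nonneg _)]
          refine ENNReal.ofReal_le_ofReal ?_
          have hfrac : (0 : ℝ) ≤ 2 * ε / ((Qn q : ℕ) : ℝ) := by positivity
          have e2 : ((P.card : ℕ) : ℝ) * (2 * ε / ((Qn q : ℕ) : ℝ)) ^ m ≤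
              (2 * c₂ * ε) ^ m := by
            rw [hPcard, ← mul_pow]
            refine pow_le_pow_left₀ (by positivity) ?_ m
            calc (((Finset.Icc (-b) b).card : ℕ) : ℝ) * (2 * ε / ((Qn q : ℕ) : ℝ))
                ≤ (c₂ * ((Qn q : ℕ) : ℝ)) * (2 * ε / ((Qn q : ℕ) : ℝ)) :=
                  mul_le_mul_of_nonneg_right hIccCard hfrac
              _ = 2 * c₂ * ε := by
                  field_simp
          calc ((P.card : ℕ) : ℝ) * ((2 * ε / ((Qn q : ℕ) : ℝ)) ^ m *
              (2 * (T : ℝ)) ^ ((n - 1) * m))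
              = ((P.card : ℕ) : ℝ) * (2 * ε / ((Qn q : ℕ) : ℝ)) ^ m *
                (2 * (T : ℝ)) ^ ((n - 1) * m) := by ring
            _ ≤ (2 * c₂ * ε) ^ m * (2 * (T : ℝ)) ^ ((n - 1) * m) := by
                refine mul_le_mul_of_nonneg_right e2 (by positivity)
            _ = κ₀ * ψ ((Qn q : ℕ) : ℝ) ^ m := by
                rw [hκ₀, ← hε]
                rw [mul_pow (2 * c₂) ε m]
                ring
  -- assemble the total sum
  set g : (Fin n → ℤ) → ℝ≥0∞ := fun q =>
    if q = 0 then 0 else ENNReal.ofReal (κ₀ * ψ ((Qn q : ℕ) : ℝ) ^ m) with hg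
  have h2 : ∀ q : Fin n → ℤ, ∑' p : Fin m → ℤ, volume (A (p, q)) ≤ g q := by
    intro q
    by_cases hq0 : q = 0
    · subst hq0
      have hz : ∀ p : Fin m → ℤ, volume (A (p, (0 : Fin n → ℤ))) = 0 := by
        intro p
        have : A (p, (0 : Fin n → ℤ)) = ∅ := by
          rw [Set.eq_empty_iff_forall_notMem]
          rintro Ξ ⟨hne, -, -⟩
          exact hne rfl
        rw [this]; exact measure_empty
      simp [hg, hz]
    · rw [hg]
      simp only [hq0, if_false]
      exact hqsum q hq0
  have h3 : ∑' q : Fin n → ℤ, g q ≠ ⊤ := by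
    rw [← ENNReal.tsum_fiberwise g Qn, tsum_eq_zero_add' ENNReal.summable]
    have hz : ∑' b : ↑(Qn ⁻¹' {0}), g ↑b = 0 := by
      refine ENNReal.tsum_eq_zero.mpr fun b => ?_
      have hb0 : Qn b.1 = 0 := b.2
      have : b.1 = 0 := by
        funext i
        have h2' : (b.1 i).natAbs ≤ Qn b.1 :=
          Finset.le_sup (f := fun i => (b.1 i).natAbs) (mem_univ i)
        simp only [Pi.zero_apply]
        exact Int.natAbs_eq_zero.mp (by omega)
      simp [hg, this]
    rw [hz, zero_add]
    set C : ℝ := 2 * n * 3 ^ (n - 1) * κ₀ with hC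
    have hCnn : 0 ≤ C := by positivity
    have hFk : ∀ k : ℕ, ∑' b : ↑(Qn ⁻¹' {k + 1}), g ↑b ≤
        ENNReal.ofReal C * ENNReal.ofReal
          (((k + 1 : ℕ) : ℝ) ^ (n - 1) * ψ ((k + 1 : ℕ) : ℝ) ^ m) := by
      intro k
      set SQ : Finset (Fin n → ℤ) := (Fintype.piFinset fun _ : Fin n =>
        Finset.Icc (-(k + 1 : ℤ)) (k + 1)).filter
        (fun q' => ∃ i, (q' i).natAbs = k + 1) with hSQ
      set const : ℝ≥0∞ := ENNReal.ofReal (κ₀ * ψ ((k + 1 : ℕ) : ℝ) ^ m) with hconst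
      have hfib_sub : ∀ q' : Fin n → ℤ, Qn q' = k + 1 → q' ∈ SQ := by
        intro q' hq'
        rw [hSQ, Finset.mem_filter, Fintype.mem_piFinset]
        refine ⟨fun i => ?_, ?_⟩
        · rw [Finset.mem_Icc]
          have h2' : (q' i).natAbs ≤ Qn q' :=
            Finset.le_sup (f := fun i => (q' i).natAbs) (mem_univ i)
          rw [hq'] at h2'
          omega
        · obtain ⟨i0, -, h⟩ := Finset.exists_mem_eq_sup (univ : Finset (Fin n))
            univ_nonempty (fun i => (q' i).natAbs)
          refine ⟨i0, ?_⟩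
          have : Qn q' = (q' i0).natAbs := h
          omega
      have hstep : ∑' b : ↑(Qn ⁻¹' {k + 1}), g ↑b ≤ ∑ _q' ∈ SQ, const := by
        rw [_root_.tsum_subtype]
        have hpt : ∀ q' : Fin n → ℤ, (Qn ⁻¹' {k + 1}).indicator g q' ≤
            (if q' ∈ SQ then const else 0) := by
          intro q'
          by_cases hmem : q' ∈ Qn ⁻¹' {k + 1}
          · have hq'' : Qn q' = k + 1 := hmem
            rw [Set.indicator_of_mem hmem, if_pos (hfib_sub q' hq'')]
            have hne : q' ≠ 0 := by
              intro h0
              rw [h0] at hq''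
              have : Qn (0 : Fin n → ℤ) = 0 := by
                simp [hQn]
              omega
            rw [hg]
            simp only [hne, if_false]
            rw [hq'']
          · rw [Set.indicator_of_notMem hmem]
            exact zero_le
        calc ∑' q', (Qn ⁻¹' {k + 1}).indicator g q'
            ≤ ∑' q' : Fin n → ℤ, (if q' ∈ SQ then const else 0) :=
              ENNReal.tsum_le_tsum hpt
          _ = ∑ q' ∈ SQ, (if q' ∈ SQ then const else 0) :=
              tsum_eq_sum (fun b hb => by simp [hb])
          _ = ∑ _q' ∈ SQ, const := Finset.sum_congr rfl fun b hb => if_pos hb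
      have hnat : SQ.card ≤ n * (2 * (2 * (k + 1) + 1) ^ (n - 1)) := by
        have hsub2 : SQ ⊆ Finset.univ.biUnion (fun i0 : Fin n =>
            Fintype.piFinset fun i => if i = i0 then ({-(k + 1 : ℤ), (k + 1 : ℤ)} : Finset ℤ)
              else Finset.Icc (-(k + 1 : ℤ)) (k + 1)) := by
          intro q' hq'
          rw [hSQ, Finset.mem_filter, Fintype.mem_piFinset] at hq'
          obtain ⟨hbox, i0, hi0⟩ := hq'
          rw [Finset.mem_biUnion]
          refine ⟨i0, mem_univ _, ?_⟩
          rw [Fintype.mem_piFinset]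
          intro i
          by_cases h : i = i0
          · subst h
            rw [if_pos rfl, Finset.mem_insert, Finset.mem_singleton]
            omega
          · rw [if_neg h]
            have := hbox i
            rwa [Finset.mem_Icc] at this ⊢
        calc SQ.card ≤ _ := Finset.card_le_card hsub2
          _ ≤ ∑ i0 : Fin n, (Fintype.piFinset fun i =>
              if i = i0 then ({-(k + 1 : ℤ), (k + 1 : ℤ)} : Finset ℤ)
              else Finset.Icc (-(k + 1 : ℤ)) (k + 1)).card := Finset.card_biUnion_le
          _ ≤ ∑ _i0 : Fin n, 2 * (2 * (k + 1) + 1) ^ (n - 1) := by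
              refine Finset.sum_le_sum fun i0 _ => ?_
              rw [Fintype.card_piFinset,
                ← Finset.mul_prod_erase Finset.univ _ (mem_univ i0), if_pos rfl]
              have hIcc : ∀ i ∈ Finset.univ.erase i0,
                  ((if i = i0 then ({-(k + 1 : ℤ), (k + 1 : ℤ)} : Finset ℤ)
                    else Finset.Icc (-(k + 1 : ℤ)) (k + 1))).card = 2 * (k + 1) + 1 := by
                intro i hi
                rw [if_neg (Finset.ne_of_mem_erase hi), Int.card_Icc]
                omega
              rw [Finset.prod_congr rfl hIcc, Finset.prod_const,
                Finset.card_erase_of_mem (mem_univ i0), card_univ, Fintype.card_fin]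
              have hpair : ({-(k + 1 : ℤ), (k + 1 : ℤ)} : Finset ℤ).card ≤ 2 :=
                le_trans (Finset.card_insert_le _ _) (by simp)
              exact Nat.mul_le_mul_right _ hpair
          _ = n * (2 * (2 * (k + 1) + 1) ^ (n - 1)) := by
              rw [Finset.sum_const, card_univ, Fintype.card_fin, smul_eq_mul]
      calc ∑' b : ↑(Qn ⁻¹' {k + 1}), g ↑b ≤ ∑ _q' ∈ SQ, const := hstep
        _ = SQ.card • const := Finset.sum_const _
        _ = (SQ.card : ℝ≥0∞) * const := by rw [nsmul_eq_mul]
        _ ≤ ENNReal.ofReal C * ENNReal.ofReal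
            (((k + 1 : ℕ) : ℝ) ^ (n - 1) * ψ ((k + 1 : ℕ) : ℝ) ^ m) := by
            rw [hconst, ← ENNReal.ofReal_natCast SQ.card,
              ← ENNReal.ofReal_mul (Nat.cast_nonneg _),
              ← ENNReal.ofReal_mul hCnn]
            refine ENNReal.ofReal_le_ofReal ?_
            have hψk : 0 ≤ ψ ((k + 1 : ℕ) : ℝ) := hψ _ (by positivity)
            have hcard : ((SQ.card : ℕ) : ℝ) ≤
                2 * n * 3 ^ (n - 1) * ((k + 1 : ℕ) : ℝ) ^ (n - 1) := by
              have h15 : ((SQ.card : ℕ) : ℝ) ≤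
                  (n : ℝ) * (2 * (2 * ((k : ℝ) + 1) + 1) ^ (n - 1)) := by
                have := hnat
                have h16 : ((SQ.card : ℕ) : ℝ) ≤
                    ((n * (2 * (2 * (k + 1) + 1) ^ (n - 1)) : ℕ) : ℝ) := by
                  exact_mod_cast this
                refine le_trans h16 (le_of_eq ?_)
                push_cast
                ring
              have h17 : (2 * ((k : ℝ) + 1) + 1) ^ (n - 1) ≤
                  (3 * ((k : ℝ) + 1)) ^ (n - 1) := by
                refine pow_le_pow_left₀ (by positivity) (by linarith) _
              have h18 : (3 * ((k : ℝ) + 1)) ^ (n - 1) =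
                  3 ^ (n - 1) * ((k : ℝ) + 1) ^ (n - 1) := mul_pow _ _ _
              have hn0 : (0 : ℝ) ≤ (n : ℝ) := Nat.cast_nonneg n
              calc ((SQ.card : ℕ) : ℝ) ≤ (n : ℝ) * (2 * (2 * ((k : ℝ) + 1) + 1) ^ (n - 1)) := h15
                _ ≤ (n : ℝ) * (2 * (3 ^ (n - 1) * ((k : ℝ) + 1) ^ (n - 1))) := by
                    rw [← h18]
                    refine mul_le_mul_of_nonneg_left (by linarith) hn0
                _ = 2 * n * 3 ^ (n - 1) * ((k : ℝ) + 1) ^ (n - 1) := by ring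
                _ = 2 * n * 3 ^ (n - 1) * ((k + 1 : ℕ) : ℝ) ^ (n - 1) := by push_cast; ring
            calc ((SQ.card : ℕ) : ℝ) * (κ₀ * ψ ((k + 1 : ℕ) : ℝ) ^ m)
                ≤ (2 * n * 3 ^ (n - 1) * ((k + 1 : ℕ) : ℝ) ^ (n - 1)) *
                  (κ₀ * ψ ((k + 1 : ℕ) : ℝ) ^ m) := by
                  refine mul_le_mul_of_nonneg_right hcard ?_
                  exact mul_nonneg hκ₀nn (pow_nonneg hψk m)
              _ = C * (((k + 1 : ℕ) : ℝ) ^ (n - 1) * ψ ((k + 1 : ℕ) : ℝ) ^ m) := by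
                  rw [hC]; ring
    have hsum' : ∑' k : ℕ, ENNReal.ofReal
        (((k + 1 : ℕ) : ℝ) ^ (n - 1) * ψ ((k + 1 : ℕ) : ℝ) ^ m) ≠ ⊤ := by
      rw [← ENNReal.ofReal_tsum_of_nonneg (fun k =>
        mul_nonneg (by positivity) (pow_nonneg (hψ _ (by positivity)) m)) hsum]
      exact ENNReal.ofReal_ne_top
    have hCne : ENNReal.ofReal C ≠ ⊤ := ENNReal.ofReal_ne_top
    refine ne_top_of_le_ne_top (ENNReal.mul_ne_top hCne hsum') ?_
    calc ∑' k : ℕ, ∑' b : ↑(Qn ⁻¹' {k + 1}), g ↑b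
        ≤ ∑' k : ℕ, ENNReal.ofReal C * ENNReal.ofReal
          (((k + 1 : ℕ) : ℝ) ^ (n - 1) * ψ ((k + 1 : ℕ) : ℝ) ^ m) :=
          ENNReal.tsum_le_tsum hFk
      _ = ENNReal.ofReal C * ∑' k : ℕ, ENNReal.ofReal
          (((k + 1 : ℕ) : ℝ) ^ (n - 1) * ψ ((k + 1 : ℕ) : ℝ) ^ m) := ENNReal.tsum_mul_left
  -- combine
  have htot : ∑' e : (Fin m → ℤ) × (Fin n → ℤ), volume (A e)
      = ∑' (q : Fin n → ℤ) (p : Fin m → ℤ), volume (A (p, q)) := by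
    rw [ENNReal.tsum_prod']
    exact ENNReal.tsum_comm
  rw [show (fun e : (Fin m → ℤ) × (Fin n → ℤ) =>
      volume {Ξ : Fin n → Fin m → ℝ | e.2 ≠ 0 ∧
        (∀ j, |∑ i, (e.2 i : ℝ) * Ξ i j + (e.1 j : ℝ)| ≤ ψ ‖e.2‖) ∧
        ∀ i j, |Ξ i j| ≤ (T : ℝ)}) = fun e => volume (A e) from rfl]
  rw [htot]
  refine ne_top_of_le_ne_top h3 ?_
  exact ENNReal.tsum_le_tsum h2

/-- If `∑_{q≥1} q^(n-1) ψ(q)^m < ∞` then for Lebesgue-almost every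
`n × m` real matrix `Ξ` there exists `κ(Ξ) > 0` such that
`max_{1≤j≤m} |q₁Ξ_{1j} + ⋯ + qₙΞ_{nj} + p_j| > κ(Ξ) ψ(|q|_∞)` for all
`(p, q) ∈ ℤ^m × (ℤⁿ \ {0})`. -/
theorem stmt4 (n m : ℕ) (hn : 1 ≤ n) (hm : 1 ≤ m) (ψ : ℝ → ℝ)
    (hψ : ∀ x : ℝ, 0 ≤ x → 0 ≤ ψ x)
    (hsum : Summable fun q : ℕ => ((q + 1 : ℕ) : ℝ) ^ (n - 1) * ψ ((q + 1 : ℕ) : ℝ) ^ m) :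
    ∀ᵐ Ξ : Fin n → Fin m → ℝ ∂volume,
      ∃ κ : ℝ, 0 < κ ∧
        ∀ (p : Fin m → ℤ) (q : Fin n → ℤ), q ≠ 0 →
          ∃ j : Fin m, κ * ψ ‖q‖ < |∑ i, (q i : ℝ) * Ξ i j + (p j : ℝ)| := by
  classical
  haveI hNm : Nonempty (Fin m) := ⟨⟨0, hm⟩⟩
  haveI hNn : Nonempty (Fin n) := ⟨⟨0, hn⟩⟩
  set A : ℕ → (Fin m → ℤ) × (Fin n → ℤ) → Set (Fin n → Fin m → ℝ) := fun T e =>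
    {Ξ : Fin n → Fin m → ℝ | e.2 ≠ 0 ∧
      (∀ j, |∑ i, (e.2 i : ℝ) * Ξ i j + (e.1 j : ℝ)| ≤ ψ ‖e.2‖) ∧
      ∀ i j, |Ξ i j| ≤ (T : ℝ)} with hA
  have hBC : ∀ᵐ Ξ : Fin n → Fin m → ℝ ∂volume, ∀ T : ℕ, {e | Ξ ∈ A T e}.Finite := by
    rw [ae_all_iff]
    intro T
    exact ae_finite_setOf_mem (sum_ne_top hn hm ψ hψ hsum T)
  have hcube : ∀ Ξ : Fin n → Fin m → ℝ, ∃ T : ℕ, ∀ i j, |Ξ i j| ≤ (T : ℝ) := by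
    intro Ξ
    refine ⟨⌈‖Ξ‖⌉₊, fun i j => ?_⟩
    calc |Ξ i j| = ‖Ξ i j‖ := rfl
      _ ≤ ‖Ξ i‖ := norm_le_pi_norm (Ξ i) j
      _ ≤ ‖Ξ‖ := norm_le_pi_norm Ξ i
      _ ≤ ((⌈‖Ξ‖⌉₊ : ℕ) : ℝ) := Nat.le_ceil _
  have hzero : ∀ᵐ Ξ : Fin n → Fin m → ℝ ∂volume,
      ∀ e : (Fin m → ℤ) × (Fin n → ℤ), e.2 ≠ 0 →
        ∃ j, ∑ i, (e.2 i : ℝ) * Ξ i j + (e.1 j : ℝ) ≠ 0 := by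
    rw [ae_all_iff]
    intro e
    rw [ae_iff]
    by_cases hq0 : e.2 = 0
    · convert measure_empty
      · rw [Set.eq_empty_iff_forall_notMem]
        intro Ξ hΞ
        simp only [Set.mem_setOf_eq] at hΞ
        push_neg at hΞ
        exact hΞ.1 hq0
      · infer_instance
    · obtain ⟨i0, hi0'⟩ : ∃ i0, e.2 i0 ≠ 0 := by
        by_contra hcon
        push_neg at hcon
        exact hq0 (funext fun i => hcon i)
      have hnull : volume {Ξ : Fin n → Fin m → ℝ |
          ∀ j, ∑ i, (e.2 i : ℝ) * Ξ i j + (e.1 j : ℝ) = 0} = 0 := by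
        have hsub : {Ξ : Fin n → Fin m → ℝ |
            ∀ j, ∑ i, (e.2 i : ℝ) * Ξ i j + (e.1 j : ℝ) = 0}
            ⊆ ⋃ T : ℕ, {Ξ : Fin n → Fin m → ℝ |
              (∀ j, |∑ i, (e.2 i : ℝ) * Ξ i j + (e.1 j : ℝ)| ≤ 0) ∧
              ∀ i j, |Ξ i j| ≤ (T : ℝ)} := by
          intro Ξ hΞ
          obtain ⟨T, hT⟩ := hcube Ξ
          exact Set.mem_iUnion.mpr ⟨T, ⟨fun j => le_of_eq (by rw [hΞ j, abs_zero]), hT⟩⟩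
        refine measure_mono_null hsub ?_
        rw [measure_iUnion_null_iff]
        intro T
        have hslab := slab_vol e.2 i0 hi0' (fun j => (e.1 j : ℝ)) 0 (T : ℝ)
          le_rfl (Nat.cast_nonneg T)
        have hz : (2 * (0:ℝ) / |(e.2 i0 : ℝ)|) ^ m * (2 * (T:ℝ)) ^ ((n-1)*m) = 0 := by
          rw [mul_zero, zero_div, zero_pow (by omega : m ≠ 0), zero_mul]
        rw [hz, ENNReal.ofReal_zero] at hslab
        exact le_antisymm hslab zero_le
      refine measure_mono_null ?_ hnull
      intro Ξ hΞ
      simp only [Set.mem_setOf_eq] at hΞ ⊢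
      push_neg at hΞ
      exact hΞ.2
  filter_upwards [hBC, hzero] with Ξ hfin hnz
  obtain ⟨T, hT⟩ := hcube Ξ
  set F := (hfin T).toFinset with hF
  set gap : (Fin m → ℤ) × (Fin n → ℤ) → ℝ := fun e =>
    Finset.univ.sup' Finset.univ_nonempty
      (fun j => |∑ i, (e.2 i : ℝ) * Ξ i j + (e.1 j : ℝ)|) with hgap
  have hgap_pos : ∀ e ∈ F, 0 < gap e := by
    intro e heF
    rw [hF, Set.Finite.mem_toFinset] at heF
    obtain ⟨hne, -, -⟩ := heF
    obtain ⟨j, hj⟩ := hnz e hne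
    calc (0:ℝ) < |∑ i, (e.2 i : ℝ) * Ξ i j + (e.1 j : ℝ)| := abs_pos.mpr hj
      _ ≤ gap e := Finset.le_sup'
          (f := fun j => |∑ i, (e.2 i : ℝ) * Ξ i j + (e.1 j : ℝ)|) (Finset.mem_univ j)
  have hψnn : ∀ q : Fin n → ℤ, 0 ≤ ψ ‖q‖ := fun q => hψ _ (norm_nonneg q)
  set κ : ℝ := min 1 (if h : F.Nonempty then
    F.inf' h (fun e => gap e / (ψ ‖e.2‖ + 1)) else 1) with hκ
  have hκ1 : κ ≤ 1 := min_le_left _ _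
  have hκpos : 0 < κ := by
    rw [hκ]
    refine lt_min one_pos ?_
    split_ifs with h
    · rw [Finset.lt_inf'_iff]
      intro e heF
      have h1 := hgap_pos e heF
      have h2 := hψnn e.2
      positivity
    · exact one_pos
  refine ⟨κ, hκpos, ?_⟩
  intro p q hq0
  by_cases hmem : Ξ ∈ A T (p, q)
  · have heF : (p, q) ∈ F := by rw [hF, Set.Finite.mem_toFinset]; exact hmem
    have hFne : F.Nonempty := ⟨(p, q), heF⟩
    have hκle : κ ≤ gap (p, q) / (ψ ‖q‖ + 1) := by
      rw [hκ, dif_pos hFne]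
      exact le_trans (min_le_right _ _) (Finset.inf'_le _ heF)
    obtain ⟨j, -, hj⟩ := Finset.exists_mem_eq_sup' (Finset.univ_nonempty (α := Fin m))
      (fun j => |∑ i, (q i : ℝ) * Ξ i j + (p j : ℝ)|)
    refine ⟨j, ?_⟩
    have hgp : 0 < gap (p, q) := hgap_pos _ heF
    have h1 : κ * ψ ‖q‖ ≤ (gap (p, q) / (ψ ‖q‖ + 1)) * ψ ‖q‖ :=
      mul_le_mul_of_nonneg_right hκle (hψnn q)
    have h2 : (gap (p, q) / (ψ ‖q‖ + 1)) * ψ ‖q‖ < gap (p, q) := by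
      rw [div_mul_eq_mul_div, div_lt_iff₀ (by linarith [hψnn q])]
      nlinarith [hψnn q, hgp]
    have h3 : gap (p, q) = |∑ i, (q i : ℝ) * Ξ i j + (p j : ℝ)| := hj
    linarith
  · have hq2 : ¬ (∀ j, |∑ i, (q i : ℝ) * Ξ i j + (p j : ℝ)| ≤ ψ ‖q‖) := by
      intro hcon
      exact hmem ⟨hq0, hcon, hT⟩
    push_neg at hq2
    obtain ⟨j, hj⟩ := hq2
    refine ⟨j, lt_of_le_of_lt ?_ hj⟩
    calc κ * ψ ‖q‖ ≤ 1 * ψ ‖q‖ := mul_le_mul_of_nonneg_right hκ1 (hψnn q)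
      _ = ψ ‖q‖ := one_mul _
end

section
/- Let n, m ≥ 1 be integers, let ε > 0 and let s ≥ 1 be a real number. For ξ ∈ ℝ^n and N ∈ ℕ set S_ξ(N,s,ε) := {ℓ ∈ {1,…,N} : there exists v ∈ ℤ^{n+1} \ {0} with ‖g_{sℓ} u_ξ v‖ < ε}; for δ ∈ [0,1) set Z(ε,N,s,δ) := {ξ ∈ B_1^n : #S_ξ(N,s,ε) ≥ δN}, where B_1^n is the closed unit ball in ℝ^n centred at the origin; for δ = (δ_1,…,δ_m) set Z_m(ε,N,s,δ) := Z(ε,N,s,δ_1) × … × Z(ε,N,s,δ_m); and set Δ_s := {δ = (δ_1,…,δ_m) ∈ (1/s)ℤ^m ∩ [0,1)^m : δ_1 + … + δ_m ≥ 1 − (m+1)/s}. Then for every Ξ ∈ Sing^m(n) all of whose columns ξ_1,…,ξ_m lie in B_1^n, there exists N_0 ∈ ℕ such that for every integer N ≥ N_0 there exists δ ∈ Δ_s with (ξ_1,…,ξ_m) ∈ Z_m(ε,N,s,δ). -/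
/-- The set `Sing^m(n)` of jointly singular `n × m` real matrices. -/
def jointlySing (n m : ℕ) : Set (Fin n → Fin m → ℝ) :=
  {Ξ | ∀ ε : ℝ, 0 < ε → ∃ Q₀ : ℕ, ∀ Q : ℕ, Q₀ ≤ Q →
    ∃ (p : Fin m → ℤ) (q : Fin n → ℤ), 1 ≤ ‖q‖ ∧ ‖q‖ ≤ (Q : ℝ) ∧
      ∃ j : Fin m, |∑ i, (q i : ℝ) * Ξ i j + (p j : ℝ)| < ε / (Q : ℝ) ^ n}

/-- The diagonal matrix `g_t = diag(e^{nt}, e^{-t}, …, e^{-t})`. -/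
noncomputable def gMat (n : ℕ) (t : ℝ) : Matrix (Fin (n + 1)) (Fin (n + 1)) ℝ :=
  Matrix.diagonal fun i => if i = 0 then Real.exp (n * t) else Real.exp (-t)

/-- The unipotent matrix `u_ξ`: the identity except that its first row is `(1, ξ₁, …, ξₙ)`. -/
def uMat (n : ℕ) (ξ : Fin n → ℝ) : Matrix (Fin (n + 1)) (Fin (n + 1)) ℝ :=
  Matrix.of fun i j => if i = 0 then (Fin.cons 1 ξ : Fin (n + 1) → ℝ) j
    else if j = i then 1 else 0

/-- `S_ξ(N, s, ε)`: the set of `ℓ ∈ {1, …, N}` such that the lattice `g_{sℓ} u_ξ ℤ^{n+1}`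
contains a non-zero vector of sup-norm less than `ε`. -/
noncomputable def Sxi (n : ℕ) (ξ : Fin n → ℝ) (N : ℕ) (s ε : ℝ) : Set ℕ :=
  {ℓ : ℕ | 1 ≤ ℓ ∧ ℓ ≤ N ∧ ∃ v : Fin (n + 1) → ℤ, v ≠ 0 ∧
    ‖(gMat n (s * ℓ) * uMat n ξ).mulVec fun i => (v i : ℝ)‖ < ε}

/-- `Z(ε, N, s, δ)`: the set of `ξ` in the closed unit ball `B_1^n` with
`#S_ξ(N, s, ε) ≥ δ N`. -/
noncomputable def Zset (n : ℕ) (ε : ℝ) (N : ℕ) (s δ : ℝ) : Set (Fin n → ℝ) :=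
  {ξ ∈ Metric.closedBall (0 : Fin n → ℝ) 1 | δ * N ≤ ((Sxi n ξ N s ε).ncard : ℝ)}

private lemma stmt13_mulVec_eq (n : ℕ) (t : ℝ) (ξ : Fin n → ℝ) (v : Fin (n+1) → ℝ) :
    (gMat n t * uMat n ξ).mulVec v =
    Fin.cons (Real.exp (n*t) * (v 0 + ∑ i, ξ i * v i.succ))
             (fun i => Real.exp (-t) * v i.succ) := by
  rw [← Matrix.mulVec_mulVec]
  funext i
  rw [gMat, Matrix.mulVec_diagonal]
  refine Fin.cases ?_ (fun i => ?_) i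
  · simp only [Fin.cons_zero, if_pos rfl]
    congr 1
    simp only [Matrix.mulVec, dotProduct, uMat, Matrix.of_apply, if_pos rfl]
    rw [Fin.sum_univ_succ]
    simp [Fin.cons_succ, mul_comm]
  · simp only [Fin.cons_succ]
    have h0 : (i.succ : Fin (n+1)) ≠ 0 := Fin.succ_ne_zero i
    rw [if_neg h0]
    congr 1
    simp only [Matrix.mulVec, dotProduct, uMat, Matrix.of_apply, if_neg h0]
    simp

private lemma stmt13_key_lemma (n m : ℕ) (ε s : ℝ) (hε : 0 < ε) (hs : 1 ≤ s)
    (Ξ : Fin n → Fin m → ℝ) (hΞ : Ξ ∈ jointlySing n m) :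
    ∃ L₀ : ℕ, 1 ≤ L₀ ∧ ∀ ℓ : ℕ, L₀ ≤ ℓ →
      ∃ j : Fin m, ∃ v : Fin (n + 1) → ℤ, v ≠ 0 ∧
        ‖(gMat n (s * ℓ) * uMat n (fun i => Ξ i j)).mulVec fun i => (v i : ℝ)‖ < ε := by
  have hε4 : (0:ℝ) < ε / 4 := by linarith
  have hε' : 0 < ε * (ε/4)^n / 2 := by positivity
  obtain ⟨Q₀, hQ₀⟩ := hΞ _ hε'
  set M : ℕ := max Q₀ 1 with hM
  set R : ℝ := max (4/ε) (2*M/ε) with hR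
  refine ⟨⌈R⌉₊ + 1, le_add_self, fun ℓ hℓ => ?_⟩
  set t : ℝ := s * ℓ with ht
  have hℓR : R ≤ (ℓ : ℝ) := by
    calc R ≤ (⌈R⌉₊ : ℝ) := Nat.le_ceil R
    _ ≤ (ℓ : ℝ) := by exact_mod_cast le_trans (Nat.le_succ _) hℓ
  have hexp : (ℓ : ℝ) ≤ Real.exp t := by
    have h1 : (ℓ:ℝ) ≤ t := by
      have : (1:ℝ) * ℓ ≤ s * ℓ := by
        apply mul_le_mul_of_nonneg_right hs (Nat.cast_nonneg ℓ)
      simpa using this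
    linarith [Real.add_one_le_exp t]
  have hRe : R ≤ Real.exp t := le_trans hℓR hexp
  have h4 : (4:ℝ) ≤ ε * Real.exp t := by
    have : 4/ε ≤ Real.exp t := le_trans (le_max_left _ _) hRe
    calc (4:ℝ) = ε * (4/ε) := by field_simp
    _ ≤ ε * Real.exp t := by nlinarith
  have hMe : (M:ℝ) ≤ ε * Real.exp t / 2 := by
    have : 2*M/ε ≤ Real.exp t := le_trans (le_max_right _ _) hRe
    rw [div_le_iff₀ hε] at this
    linarith
  set Q : ℕ := ⌊ε * Real.exp t / 2⌋₊ with hQ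
  have hx0 : 0 ≤ ε * Real.exp t / 2 := by linarith
  have hQle : (Q:ℝ) ≤ ε * Real.exp t / 2 := Nat.floor_le hx0
  have hQge : ε * Real.exp t / 4 ≤ (Q:ℝ) := by
    have h1 : ε * Real.exp t / 2 - 1 < (Q:ℝ) := Nat.sub_one_lt_floor _
    linarith
  have hQQ₀ : Q₀ ≤ Q := by
    apply Nat.le_floor
    calc ((Q₀:ℕ):ℝ) ≤ (M:ℝ) := by exact_mod_cast le_max_left Q₀ 1
    _ ≤ _ := hMe
  obtain ⟨p, q, hq1, hqQ, j, hj⟩ := hQ₀ Q hQQ₀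
  have hqne : q ≠ 0 := by
    intro h; rw [h, norm_zero] at hq1; linarith
  refine ⟨j, Fin.cons (p j) q, ?_, ?_⟩
  · intro hv
    apply hqne
    funext i
    have := congrFun hv i.succ
    simpa [Fin.cons_succ] using this
  · have hQpos : (0:ℝ) < Q := lt_of_lt_of_le (by positivity) hQge
    have hcast : (fun i => ((Fin.cons (p j) q : Fin (n+1) → ℤ) i : ℝ)) =
        Fin.cons ((p j : ℝ)) (fun i => (q i : ℝ)) := by
      funext i
      refine Fin.cases ?_ (fun i => ?_) i <;> simp [Fin.cons_zero, Fin.cons_succ]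
    rw [hcast, stmt13_mulVec_eq]
    rw [pi_norm_lt_iff hε]
    intro i
    refine Fin.cases ?_ (fun i => ?_) i
    · simp only [Fin.cons_zero, Real.norm_eq_abs, Fin.cons_succ]
      rw [abs_mul, abs_of_pos (Real.exp_pos _)]
      have hQn : ((ε/4) * Real.exp t)^n ≤ (Q:ℝ)^n := by
        apply pow_le_pow_left₀ (by positivity)
        linarith
      have hent : ((ε/4) * Real.exp t)^n = (ε/4)^n * Real.exp (n * t) := by
        rw [mul_pow, ← Real.exp_nat_mul]
      have hbound : ε * (ε/4)^n / 2 / (Q:ℝ)^n ≤ ε / 2 / Real.exp (n * t) := by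
        rw [div_le_div_iff₀ (by positivity) (by positivity)]
        calc ε * (ε/4)^n / 2 * Real.exp (n*t) = ε / 2 * ((ε/4)^n * Real.exp (n*t)) := by ring
        _ = ε / 2 * ((ε/4) * Real.exp t)^n := by rw [hent]
        _ ≤ ε / 2 * (Q:ℝ)^n := by nlinarith [Real.exp_pos t]
      have heq : |(p j : ℝ) + ∑ i, Ξ i j * (q i : ℝ)| = |∑ i, (q i : ℝ) * Ξ i j + (p j : ℝ)| := by
        congr 1
        rw [add_comm]
        congr 1
        exact Finset.sum_congr rfl (fun i _ => mul_comm _ _)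
      rw [heq]
      calc Real.exp (n * t) * |∑ i, (q i : ℝ) * Ξ i j + (p j : ℝ)|
          < Real.exp (n * t) * (ε * (ε/4)^n / 2 / (Q:ℝ)^n) := by
            exact mul_lt_mul_of_pos_left hj (Real.exp_pos _)
      _ ≤ Real.exp (n * t) * (ε / 2 / Real.exp (n * t)) :=
            mul_le_mul_of_nonneg_left hbound (le_of_lt (Real.exp_pos _))
      _ = ε / 2 := by field_simp
      _ < ε := by linarith
    · simp only [Fin.cons_succ, Real.norm_eq_abs]
      rw [abs_mul, abs_of_pos (Real.exp_pos _)]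
      have hqi : |(q i : ℝ)| ≤ (Q:ℝ) := by
        calc |(q i : ℝ)| = ‖q i‖ := (Int.norm_eq_abs _).symm ▸ by push_cast [Int.norm_eq_abs]; rfl
        _ ≤ ‖q‖ := norm_le_pi_norm q i
        _ ≤ (Q:ℝ) := hqQ
      have he : Real.exp (-t) * (Q:ℝ) ≤ ε / 2 := by
        have := Real.exp_pos (-t)
        have hee : Real.exp (-t) * Real.exp t = 1 := by
          rw [← Real.exp_add]; simp
        calc Real.exp (-t) * (Q:ℝ) ≤ Real.exp (-t) * (ε * Real.exp t / 2) := by nlinarith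
        _ = ε / 2 * (Real.exp (-t) * Real.exp t) := by ring
        _ = ε / 2 := by rw [hee]; ring
      calc Real.exp (-t) * |(q i:ℝ)| ≤ Real.exp (-t) * (Q:ℝ) := by
            exact mul_le_mul_of_nonneg_left hqi (le_of_lt (Real.exp_pos _))
      _ ≤ ε / 2 := he
      _ < ε := by linarith

private lemma stmt13_aux_main (n m : ℕ) (hn : 1 ≤ n) (hm : 1 ≤ m) (ε s : ℝ) (hε : 0 < ε) (hs : 1 ≤ s)
    (Ξ : Fin n → Fin m → ℝ)
    (hball : ∀ j, (fun i => Ξ i j) ∈ Metric.closedBall (0 : Fin n → ℝ) 1)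
    (L₀ : ℕ) (hL₀1 : 1 ≤ L₀)
    (hkey : ∀ ℓ : ℕ, L₀ ≤ ℓ →
      ∃ j : Fin m, ∃ v : Fin (n + 1) → ℤ, v ≠ 0 ∧
        ‖(gMat n (s * ℓ) * uMat n (fun i => Ξ i j)).mulVec fun i => (v i : ℝ)‖ < ε) :
    ∃ N₀ : ℕ, ∀ N : ℕ, N₀ ≤ N →
      ∃ δ : Fin m → ℝ,
        ((∀ j, ∃ k : ℤ, δ j = (k : ℝ) / s) ∧ (∀ j, δ j ∈ Set.Ico (0 : ℝ) 1) ∧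
          1 - ((m : ℝ) + 1) / s ≤ ∑ j, δ j) ∧
        ∀ j, (fun i => Ξ i j) ∈ Zset n ε N s (δ j) := by
  classical
  have hs0 : (0:ℝ) < s := lt_of_lt_of_le one_pos hs
  refine ⟨L₀ * ⌈s⌉₊ + 1, fun N hN => ?_⟩
  have hceil1 : 1 ≤ ⌈s⌉₊ := Nat.one_le_ceil_iff.mpr hs0
  have hLN : L₀ + 1 ≤ N := by
    calc L₀ + 1 ≤ L₀ * ⌈s⌉₊ + 1 := by
          have := Nat.mul_le_mul_left L₀ hceil1
          omega
    _ ≤ N := hN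
  have hN1 : 1 ≤ N := le_trans (by omega) hLN
  have hN0 : (0:ℝ) < N := by exact_mod_cast hN1
  have hsLN : s * L₀ ≤ (N:ℝ) := by
    calc s * L₀ ≤ (⌈s⌉₊ : ℝ) * L₀ := by
          apply mul_le_mul_of_nonneg_right (Nat.le_ceil s) (Nat.cast_nonneg _)
    _ = ((L₀ * ⌈s⌉₊ : ℕ) : ℝ) := by push_cast; ring
    _ ≤ N := by exact_mod_cast le_trans (Nat.le_succ _) hN
  set S : Fin m → Set ℕ := fun j => Sxi n (fun i => Ξ i j) N s ε with hS
  have hSsub : ∀ j, S j ⊆ Set.Icc 1 N := by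
    intro j ℓ hℓ
    exact ⟨hℓ.1, hℓ.2.1⟩
  have hSfin : ∀ j, (S j).Finite := fun j => (Set.finite_Icc 1 N).subset (hSsub j)
  have hScard_le : ∀ j, (S j).ncard ≤ N := by
    intro j
    calc (S j).ncard ≤ (Set.Icc 1 N).ncard :=
          Set.ncard_le_ncard (hSsub j) (Set.finite_Icc 1 N)
    _ = N := by rw [← Finset.coe_Icc, Set.ncard_coe_finset, Nat.card_Icc]; omega
  -- covering
  let F : Fin m → Finset ℕ := fun j => (hSfin j).toFinset
  have hFcard : ∀ j, (F j).card = (S j).ncard := fun j =>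
    (Set.ncard_eq_toFinset_card _ (hSfin j)).symm
  have hcov : Finset.Icc L₀ N ⊆ Finset.univ.biUnion F := by
    intro ℓ hℓ
    rw [Finset.mem_Icc] at hℓ
    obtain ⟨j, v, hv1, hv2⟩ := hkey ℓ hℓ.1
    refine Finset.mem_biUnion.mpr ⟨j, Finset.mem_univ j, ?_⟩
    rw [Set.Finite.mem_toFinset]
    exact ⟨le_trans hL₀1 hℓ.1, hℓ.2, v, hv1, hv2⟩
  have hsum_nat : N + 1 - L₀ ≤ ∑ j, (S j).ncard := by
    calc N + 1 - L₀ = (Finset.Icc L₀ N).card := (Nat.card_Icc L₀ N).symm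
    _ ≤ (Finset.univ.biUnion F).card := Finset.card_le_card hcov
    _ ≤ ∑ j, (F j).card := Finset.card_biUnion_le
    _ = ∑ j, (S j).ncard := by simp [hFcard]
  have hsum : (N:ℝ) - L₀ ≤ ∑ j, ((S j).ncard : ℝ) := by
    have h1 : ((N + 1 - L₀ : ℕ) : ℝ) ≤ ∑ j, ((S j).ncard : ℝ) := by
      exact_mod_cast hsum_nat
    have h2 : (N:ℝ) - L₀ ≤ ((N + 1 - L₀ : ℕ) : ℝ) := by
      rw [Nat.cast_sub (by omega)]
      push_cast
      linarith
    linarith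
  -- define δ
  set a : Fin m → ℝ := fun j => ((S j).ncard : ℝ) / N with ha
  have ha0 : ∀ j, 0 ≤ a j := fun j => by positivity
  have ha1 : ∀ j, a j ≤ 1 := by
    intro j
    rw [ha]
    rw [div_le_one hN0]
    exact_mod_cast hScard_le j
  set k : Fin m → ℕ := fun j => min ⌊s * a j⌋₊ (⌈s⌉₊ - 1) with hk
  refine ⟨fun j => (k j : ℝ) / s, ⟨?_, ?_, ?_⟩, ?_⟩
  · exact fun j => ⟨(k j : ℤ), by push_cast; ring⟩
  · intro j
    constructor
    · positivity
    · rw [div_lt_one hs0]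
      calc (k j : ℝ) ≤ ((⌈s⌉₊ - 1 : ℕ) : ℝ) := by exact_mod_cast min_le_right _ _
      _ = (⌈s⌉₊ : ℝ) - 1 := by rw [Nat.cast_sub hceil1]; simp
      _ < s := by
          have := Nat.ceil_lt_add_one (le_of_lt hs0)
          linarith
  · -- sum bound
    have hk_ge : ∀ j, s * a j - 1 ≤ (k j : ℝ) := by
      intro j
      have h1 : s * a j - 1 < (⌊s * a j⌋₊ : ℝ) := Nat.sub_one_lt_floor _
      have h2 : s * a j - 1 ≤ ((⌈s⌉₊ - 1 : ℕ) : ℝ) := by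
        rw [Nat.cast_sub hceil1]
        have h3 : s ≤ (⌈s⌉₊ : ℝ) := Nat.le_ceil s
        have h4 : s * a j ≤ s := by nlinarith [ha0 j, ha1 j]
        push_cast
        linarith
      have : (k j : ℝ) = min (⌊s * a j⌋₊ : ℝ) ((⌈s⌉₊ - 1 : ℕ) : ℝ) := by
        rw [hk]; push_cast [Nat.cast_min]; ring_nf
      rw [this]
      exact le_min (le_of_lt h1) h2
    have hsa : 1 - 1/s ≤ ∑ j, a j := by
      have h1 : ∑ j, a j = (∑ j, ((S j).ncard:ℝ)) / N := by
        rw [ha, Finset.sum_div]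
      rw [h1, le_div_iff₀ hN0]
      have hL₀s : (L₀ : ℝ) ≤ N / s := by
        rw [le_div_iff₀ hs0]
        calc (L₀:ℝ) * s = s * L₀ := by ring
        _ ≤ N := hsLN
      have : (1 - 1/s) * N = N - N/s * 1 := by field_simp
      rw [this]
      have hNs : (N:ℝ)/s ≥ L₀ := hL₀s
      linarith [hsum]
    calc 1 - ((m:ℝ) + 1)/s = (1 - 1/s) - m * (1/s) := by field_simp; ring
    _ ≤ ∑ j, a j - m * (1/s) := by linarith
    _ = ∑ j, (a j - 1/s) := by rw [Finset.sum_sub_distrib]; simp [Finset.card_univ]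
    _ ≤ ∑ j, (k j : ℝ) / s := by
        apply Finset.sum_le_sum
        intro j _
        have heq : a j - 1/s = (s * a j - 1)/s := by field_simp
        rw [heq]
        rw [div_le_div_iff₀ hs0 hs0]
        nlinarith [hk_ge j]

  · intro j
    refine ⟨hball j, ?_⟩
    have hkla : (k j : ℝ) ≤ s * a j := by
      calc (k j : ℝ) ≤ (⌊s * a j⌋₊ : ℝ) := by exact_mod_cast min_le_left _ _
      _ ≤ s * a j := Nat.floor_le (by positivity)
    have h1 : (k j : ℝ) / s ≤ a j := by
      rw [div_le_iff₀ hs0]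
      calc (k j : ℝ) ≤ s * a j := hkla
      _ = a j * s := mul_comm _ _
    calc (k j : ℝ) / s * N ≤ a j * N := mul_le_mul_of_nonneg_right h1 (le_of_lt hN0)
    _ = ((S j).ncard : ℝ) := by
          simp only [ha]
          field_simp

/-- Let `ε > 0` and `s ≥ 1`.  For every `Ξ ∈ Sing^m(n)` all of whose
columns lie in the closed unit ball `B_1^n`, there exists `N₀ ∈ ℕ` such that for every
`N ≥ N₀` there exists `δ = (δ₁, …, δ_m) ∈ Δ_s` (i.e. each `δ_j ∈ (1/s)ℤ ∩ [0,1)` and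
`δ₁ + ⋯ + δ_m ≥ 1 − (m+1)/s`) with `(ξ₁, …, ξ_m) ∈ Z(ε,N,s,δ₁) × ⋯ × Z(ε,N,s,δ_m)`. -/
theorem stmt13 (n m : ℕ) (hn : 1 ≤ n) (hm : 1 ≤ m) (ε s : ℝ) (hε : 0 < ε) (hs : 1 ≤ s)
    (Ξ : Fin n → Fin m → ℝ) (hΞ : Ξ ∈ jointlySing n m)
    (hball : ∀ j, (fun i => Ξ i j) ∈ Metric.closedBall (0 : Fin n → ℝ) 1) :
    ∃ N₀ : ℕ, ∀ N : ℕ, N₀ ≤ N →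
      ∃ δ : Fin m → ℝ,
        ((∀ j, ∃ k : ℤ, δ j = (k : ℝ) / s) ∧ (∀ j, δ j ∈ Set.Ico (0 : ℝ) 1) ∧
          1 - ((m : ℝ) + 1) / s ≤ ∑ j, δ j) ∧
        ∀ j, (fun i => Ξ i j) ∈ Zset n ε N s (δ j) := by
  obtain ⟨L₀, hL₀1, hkey⟩ := stmt13_key_lemma n m ε s hε hs Ξ hΞ
  exact stmt13_aux_main n m hn hm ε s hε hs Ξ hball L₀ hL₀1 hkey
end

section
/- Let n ≥ 1 be an integer and let ξ be a real algebraic number of degree n+1 over ℚ. Then the point (ξ, ξ², …, ξ^n) ∈ ℝ^n is badly approximable: there exists a constant κ > 0 such that |q_1ξ + q_2ξ² + … + q_nξ^n + p| ≥ κ/|q|_∞^n for all p ∈ ℤ and all q = (q_1,…,q_n) ∈ ℤ^n \ {0}. -/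
open Polynomial IntermediateField

noncomputable def Complex.abs : AbsoluteValue ℂ ℝ :=
  IsAbsoluteValue.toAbsoluteValue (norm : ℂ → ℝ)

theorem Complex.abs_apply (z : ℂ) : Complex.abs z = ‖z‖ := rfl

theorem Complex.abs_ofReal (r : ℝ) : Complex.abs (r : ℂ) = |r| := by
  simp [Complex.abs_apply]

theorem Complex.abs_intCast (m : ℤ) : Complex.abs (m : ℂ) = |(m : ℝ)| := by
  simp [Complex.abs_apply]

set_option maxHeartbeats 2000000 in
/-- If `ξ` is a real algebraic number of degree `n + 1` over `ℚ`, then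
the point `(ξ, ξ², …, ξⁿ) ∈ ℝⁿ` is badly approximable: there exists `κ > 0` such that
`|q₁ξ + q₂ξ² + ⋯ + qₙξⁿ + p| ≥ κ / |q|_∞ⁿ` for all `p ∈ ℤ` and all
`q ∈ ℤⁿ \ {0}`. -/
theorem stmt16 (n : ℕ) (hn : 1 ≤ n) (ξ : ℝ) (hξ : IsAlgebraic ℚ ξ)
    (hdeg : (minpoly ℚ ξ).natDegree = n + 1) :
    ∃ κ : ℝ, 0 < κ ∧
      ∀ (p : ℤ) (q : Fin n → ℤ), q ≠ 0 →
        κ / ‖q‖ ^ n ≤ |∑ i, (q i : ℝ) * ξ ^ ((i : ℕ) + 1) + (p : ℝ)| := by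
  classical
  have hint : IsIntegral ℚ ξ := hξ.isIntegral
  haveI : FiniteDimensional ℚ ℚ⟮ξ⟯ := IntermediateField.adjoin.finiteDimensional hint
  set K := ℚ⟮ξ⟯ with hK
  set x : K := IntermediateField.AdjoinSimple.gen ℚ ξ with hx
  have hxval : (x : ℝ) = ξ := rfl
  have hrank : Module.finrank ℚ K = n + 1 := by
    rw [hK, IntermediateField.adjoin.finrank hint, hdeg]
  have halgx : IsAlgebraic ℤ x :=
    (IsFractionRing.isAlgebraic_iff ℤ ℚ K).mpr (IsIntegral.of_finite ℚ x).isAlgebraic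
  obtain ⟨t, a, ha0, hta⟩ : ∃ (t : integralClosure ℤ K) (a : ℤ), a ≠ 0 ∧
      algebraMap ℤ K a * x = t := by
    obtain ⟨a, ha0, hint⟩ := halgx.exists_integral_multiple
    exact ⟨⟨_, hint⟩, a, ha0, (Algebra.smul_def a x).symm⟩
  set θ : K := (a : K) * x with hθdef
  have hθint : IsIntegral ℤ θ := by
    have h1 : algebraMap ℤ K a * x = (t : K) := hta
    rw [hθdef, show ((a : K)) = algebraMap ℤ K a by simp [algebraMap_int_eq], h1]
    exact t.2
  clear_value θ
  -- embeddings
  set σ₀ : K →ₐ[ℚ] ℂ := (Complex.ofRealAm.restrictScalars ℚ).comp K.val with hσ₀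
  have hσ₀val : ∀ w : K, Complex.abs (σ₀ w) = |(w : ℝ)| := by
    intro w; rw [hσ₀]; exact Complex.abs_ofReal _
  clear_value σ₀
  set M : ℝ := 1 + ∑ σ : K →ₐ[ℚ] ℂ, Complex.abs (σ θ) with hMdef
  have hM1 : 1 ≤ M := by
    have : 0 ≤ ∑ σ : K →ₐ[ℚ] ℂ, Complex.abs (σ θ) :=
      Finset.sum_nonneg fun σ _ => AbsoluteValue.nonneg _ _
    simp [hMdef]; linarith
  have hMσ : ∀ σ : K →ₐ[ℚ] ℂ, Complex.abs (σ θ) ≤ M := by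
    intro σ
    have := Finset.single_le_sum (f := fun σ : K →ₐ[ℚ] ℂ => Complex.abs (σ θ))
      (fun σ _ => AbsoluteValue.nonneg _ _) (Finset.mem_univ σ)
    simp [hMdef]; linarith
  clear_value M
  set A : ℝ := 1 + |(a : ℝ)| with hAdef
  have hA1 : 1 ≤ A := by
    have h := abs_nonneg ((a : ℝ)); rw [hAdef]; linarith
  have haA : |(a : ℝ)| ≤ A := by rw [hAdef]; linarith
  clear_value A
  set B : ℝ := (n + 1) * A ^ n * M ^ n with hBdef
  have hB0 : 0 < B := by positivity
  clear_value B
  have hcard : Fintype.card (K →ₐ[ℚ] ℂ) = n + 1 := by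
    rw [AlgHom.card, hrank]
  -- the key inequality
  have key : ∀ (p : ℤ) (q : Fin n → ℤ), q ≠ 0 →
      1 ≤ A ^ n * (B * max ‖q‖ |(p : ℝ)|) ^ n *
        |∑ i, (q i : ℝ) * ξ ^ ((i : ℕ) + 1) + (p : ℝ)| := by
    intro p q hq
    set H : ℝ := max ‖q‖ |(p : ℝ)| with hHdef
    have hq1 : 1 ≤ ‖q‖ := by
      obtain ⟨i, hi⟩ := Function.ne_iff.mp hq
      calc (1 : ℝ) ≤ ‖q i‖ := by
            rw [Int.norm_eq_abs]; exact_mod_cast Int.one_le_abs hi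
        _ ≤ ‖q‖ := norm_le_pi_norm q i
    have hH1 : 1 ≤ H := le_trans hq1 (le_max_left _ _)
    have hqH : ∀ i, |(q i : ℝ)| ≤ H := by
      intro i
      calc |(q i : ℝ)| = ‖q i‖ := (Int.norm_eq_abs _).symm ▸ (by push_cast; rfl)
        _ ≤ ‖q‖ := norm_le_pi_norm q i
        _ ≤ H := le_max_left _ _
    have hpH : |(p : ℝ)| ≤ H := le_max_right _ _
    clear_value H
    set y : K := (∑ i : Fin n, (q i : K) * x ^ ((i : ℕ) + 1)) + (p : K) with hydef
    have hyval : (y : ℝ) = ∑ i, (q i : ℝ) * ξ ^ ((i : ℕ) + 1) + (p : ℝ) := by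
      push_cast [hydef, hxval]
      rfl
    have hy0 : y ≠ 0 := by
      intro h0
      have hreal : ∑ i, (q i : ℝ) * ξ ^ ((i : ℕ) + 1) + (p : ℝ) = 0 := by
        rw [← hyval, h0]; rfl
      set g : ℚ[X] := (∑ i : Fin n, C ((q i : ℚ)) * X ^ ((i : ℕ) + 1)) + C (p : ℚ) with hg
      have hgval : aeval ξ g = 0 := by
        rw [hg]
        simp only [map_add, map_sum, map_mul, map_pow, aeval_C, aeval_X]
        rw [← hreal]
        simp only [eq_ratCast, Rat.cast_intCast]
      have hgne : g ≠ 0 := by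
        obtain ⟨i, hi⟩ := Function.ne_iff.mp hq
        have hco : g.coeff ((i : ℕ) + 1) = (q i : ℚ) := by
          rw [hg, coeff_add, coeff_C, if_neg (Nat.succ_ne_zero _), add_zero,
            finset_sum_coeff]
          rw [Finset.sum_eq_single i]
          · simp [coeff_C_mul, coeff_X_pow]
          · intro j _ hj
            have hne : (i : ℕ) + 1 ≠ (j : ℕ) + 1 := fun h =>
              hj (Fin.val_injective (Nat.succ_injective h.symm))
            simp [coeff_C_mul, coeff_X_pow, hne, Fin.val_inj, Ne.symm hj]
          · intro h; exact absurd (Finset.mem_univ i) h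
        intro h
        rw [h, coeff_zero] at hco
        exact hi (by exact_mod_cast hco.symm)
      have hdle := minpoly.degree_le_of_ne_zero ℚ ξ hgne hgval
      have h1 : (minpoly ℚ ξ).natDegree ≤ g.natDegree := natDegree_le_natDegree hdle
      have h2 : g.natDegree ≤ n := by
        rw [hg]
        refine (natDegree_add_le _ _).trans (max_le ?_ (by simp))
        refine natDegree_sum_le_of_forall_le _ _ fun i _ => ?_
        exact (natDegree_C_mul_X_pow_le _ _).trans i.isLt
      omega
    clear_value y
    set z : K := (a : K) ^ n * y with hzdef
    have hzsum : z = (∑ i : Fin n, ((q i * a ^ (n - ((i : ℕ) + 1)) : ℤ) : K)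
        * θ ^ ((i : ℕ) + 1)) + ((p * a ^ n : ℤ) : K) := by
      rw [hzdef, hydef, mul_add, Finset.mul_sum]
      congr 1
      · refine Finset.sum_congr rfl fun i _ => ?_
        have hle : (i : ℕ) + 1 ≤ n := i.isLt
        rw [hθdef, mul_pow, ← pow_sub_mul_pow ((a : K)) hle]
        push_cast
        ring
      · push_cast
        ring
    have hintcast : ∀ c : ℤ, IsIntegral ℤ ((c : K)) := fun c => by
      rw [show ((c : K)) = algebraMap ℤ K c by simp [algebraMap_int_eq]]
      exact isIntegral_algebraMap
    have hzint : IsIntegral ℤ z := by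
      rw [hzsum]
      exact IsIntegral.add
        (IsIntegral.sum _ fun i _ => (hintcast _).mul (hθint.pow _)) (hintcast _)
    have hz0 : z ≠ 0 := by
      refine mul_ne_zero (pow_ne_zero _ ?_) hy0
      exact_mod_cast ha0
    clear_value z
    -- norm is a nonzero integer
    set N : ℚ := Algebra.norm ℚ z with hNdef
    clear_value N
    have hN1 : 1 ≤ |N| := by
      have hNint : IsIntegral ℤ N := by
        rw [hNdef]; exact Algebra.isIntegral_norm ℚ hzint
      obtain ⟨m, hm⟩ := IsIntegrallyClosed.isIntegral_iff.mp hNint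
      have hNne : N ≠ 0 := by
        rw [hNdef]
        exact Algebra.norm_ne_zero_iff.mpr hz0
      have hmne : m ≠ 0 := by
        rintro rfl
        rw [map_zero] at hm
        exact hNne hm.symm
      rw [← hm]
      have := Int.one_le_abs hmne
      rw [show algebraMap ℤ ℚ m = (m : ℚ) from eq_intCast _ _]
      rw [show |((m : ℤ) : ℚ)| = ((|m| : ℤ) : ℚ) by push_cast; ring]
      exact_mod_cast this
    have hprod : Complex.abs ((N : ℂ)) = ∏ σ : K →ₐ[ℚ] ℂ, Complex.abs (σ z) := by
      have := Algebra.norm_eq_prod_embeddings ℚ ℂ (x := z)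
      rw [← hNdef, show algebraMap ℚ ℂ N = (N : ℂ) from eq_ratCast _ _] at this
      rw [this]
      exact map_prod Complex.abs _ _
    have hσbound : ∀ σ : K →ₐ[ℚ] ℂ, Complex.abs (σ z) ≤ B * H := by
      intro σ
      have hz2 : σ z = (∑ i : Fin n,
          ((q i : ℂ) * (a : ℂ) ^ (n - ((i : ℕ) + 1))) * (σ θ) ^ ((i : ℕ) + 1))
          + (p : ℂ) * (a : ℂ) ^ n := by
        rw [hzsum, map_add, map_sum]
        congr 1
        · refine Finset.sum_congr rfl fun i _ => ?_
          rw [map_mul, map_pow]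
          congr 1
          push_cast
          rw [map_mul, map_intCast, map_pow, map_intCast]
        · push_cast
          rw [map_mul, map_intCast, map_pow, map_intCast]
      have tri : Complex.abs (σ z) ≤ (∑ i : Fin n,
          |(q i : ℝ)| * |(a : ℝ)| ^ (n - ((i : ℕ) + 1)) * (Complex.abs (σ θ)) ^ ((i : ℕ) + 1))
          + |(p : ℝ)| * |(a : ℝ)| ^ n := by
        rw [hz2]
        refine (Complex.abs.add_le _ _).trans (add_le_add ?_ ?_)
        · refine (Complex.abs.sum_le _ _).trans (le_of_eq (Finset.sum_congr rfl fun i _ => ?_))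
          rw [map_mul, map_mul, map_pow, map_pow]
          simp [Complex.abs_intCast]
        · rw [map_mul, map_pow]
          simp [Complex.abs_intCast]
      have hAn : ∀ k : ℕ, k ≤ n → |(a : ℝ)| ^ k ≤ A ^ n := fun k hk =>
        (pow_le_pow_left₀ (abs_nonneg _) haA _).trans (pow_le_pow_right₀ hA1 hk)
      have hMn : ∀ k : ℕ, k ≤ n → (Complex.abs (σ θ)) ^ k ≤ M ^ n := fun k hk =>
        (pow_le_pow_left₀ (AbsoluteValue.nonneg _ _) (hMσ σ) _).trans
          (pow_le_pow_right₀ hM1 hk)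
      have hM1n : (1 : ℝ) ≤ M ^ n := one_le_pow₀ hM1
      have hterm : ∀ i : Fin n,
          |(q i : ℝ)| * |(a : ℝ)| ^ (n - ((i : ℕ) + 1)) * (Complex.abs (σ θ)) ^ ((i : ℕ) + 1)
            ≤ H * (A ^ n * M ^ n) := by
        intro i
        have h1 := hAn _ (Nat.sub_le n ((i : ℕ) + 1))
        have h2 := hMn _ (i.isLt : (i : ℕ) + 1 ≤ n)
        have := mul_le_mul (mul_le_mul (hqH i) h1 (pow_nonneg (abs_nonneg _) _)
          (le_trans (abs_nonneg _) (hqH i))) h2 (pow_nonneg (AbsoluteValue.nonneg _ _) _)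
          (by positivity)
        calc |(q i : ℝ)| * |(a : ℝ)| ^ (n - ((i : ℕ) + 1)) * (Complex.abs (σ θ)) ^ ((i : ℕ) + 1)
            ≤ H * A ^ n * M ^ n := this
          _ = H * (A ^ n * M ^ n) := by ring
      have hpterm : |(p : ℝ)| * |(a : ℝ)| ^ n ≤ H * (A ^ n * M ^ n) := by
        have h1 := hAn n le_rfl
        calc |(p : ℝ)| * |(a : ℝ)| ^ n ≤ H * A ^ n :=
              mul_le_mul hpH h1 (pow_nonneg (abs_nonneg _) _)
                (le_trans (abs_nonneg _) hpH)
          _ ≤ H * (A ^ n * M ^ n) :=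
              mul_le_mul_of_nonneg_left
                (le_mul_of_one_le_right (by positivity) hM1n)
                (le_trans (abs_nonneg (p : ℝ)) hpH)
      calc Complex.abs (σ z)
          ≤ (∑ i : Fin n,
            |(q i : ℝ)| * |(a : ℝ)| ^ (n - ((i : ℕ) + 1)) * (Complex.abs (σ θ)) ^ ((i : ℕ) + 1))
            + |(p : ℝ)| * |(a : ℝ)| ^ n := tri
        _ ≤ (∑ _i : Fin n, H * (A ^ n * M ^ n)) + H * (A ^ n * M ^ n) :=
            add_le_add (Finset.sum_le_sum fun i _ => hterm i) hpterm
        _ = ((n : ℝ) + 1) * A ^ n * M ^ n * H := by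
            rw [Finset.sum_const, Finset.card_univ, Fintype.card_fin]
            ring
        _ = B * H := by rw [hBdef]
    have hprodbound : ∏ σ ∈ Finset.univ.erase σ₀, Complex.abs (σ z) ≤ (B * H) ^ n := by
      calc ∏ σ ∈ Finset.univ.erase σ₀, Complex.abs (σ z)
          ≤ ∏ _σ ∈ Finset.univ.erase σ₀, (B * H) :=
            Finset.prod_le_prod (fun σ _ => AbsoluteValue.nonneg _ _)
              (fun σ _ => hσbound σ)
        _ = (B * H) ^ n := by
            rw [Finset.prod_const, Finset.card_erase_of_mem (Finset.mem_univ _),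
              Finset.card_univ, hcard, Nat.add_sub_cancel]
    have hsplit : (1 : ℝ) ≤ Complex.abs (σ₀ z) * (B * H) ^ n := by
      have h1 : (1 : ℝ) ≤ Complex.abs ((N : ℂ)) := by
        rw [show ((N : ℂ)) = ((N : ℝ) : ℂ) by push_cast; ring, Complex.abs_ofReal]
        rw [show |((N : ℚ) : ℝ)| = ((|N| : ℚ) : ℝ) by push_cast; ring]
        exact_mod_cast hN1
      calc (1 : ℝ) ≤ Complex.abs ((N : ℂ)) := h1
        _ = ∏ σ : K →ₐ[ℚ] ℂ, Complex.abs (σ z) := hprod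
        _ = Complex.abs (σ₀ z) * ∏ σ ∈ Finset.univ.erase σ₀, Complex.abs (σ z) :=
            (Finset.mul_prod_erase _ _ (Finset.mem_univ σ₀)).symm
        _ ≤ Complex.abs (σ₀ z) * (B * H) ^ n := by
            exact mul_le_mul_of_nonneg_left hprodbound (AbsoluteValue.nonneg _ _)
    have hσ₀z : Complex.abs (σ₀ z) ≤ A ^ n * |(y : ℝ)| := by
      rw [hσ₀val, hzdef]
      push_cast
      rw [abs_mul, abs_pow]
      exact mul_le_mul_of_nonneg_right (pow_le_pow_left₀ (abs_nonneg _) haA n) (abs_nonneg _)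
    rw [← hyval]
    calc (1 : ℝ) ≤ Complex.abs (σ₀ z) * (B * H) ^ n := hsplit
      _ ≤ (A ^ n * |(y : ℝ)|) * (B * H) ^ n := by
          exact mul_le_mul_of_nonneg_right hσ₀z (by positivity)
      _ = A ^ n * (B * H) ^ n * |(y : ℝ)| := by ring
  -- conclude
  set Mξ : ℝ := 1 + |ξ| with hMξ
  have hMξ1 : 1 ≤ Mξ := by rw [hMξ]; have := abs_nonneg ξ; linarith
  set E : ℝ := n * Mξ ^ n with hE
  have hE0 : 0 ≤ E := by positivity
  set D : ℝ := E + 1 with hD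
  have hD1 : 1 ≤ D := by rw [hD]; linarith
  have hD0 : 0 < D := lt_of_lt_of_le one_pos hD1
  set κ₁ : ℝ := 1 / (A ^ n * B ^ n * D ^ n) with hκ₁
  have hκ₁pos : 0 < κ₁ := by rw [hκ₁]; positivity
  refine ⟨min κ₁ 1, lt_min hκ₁pos one_pos, ?_⟩
  intro p q hq
  have hq1 : 1 ≤ ‖q‖ := by
    obtain ⟨i, hi⟩ := Function.ne_iff.mp hq
    calc (1 : ℝ) ≤ ‖q i‖ := by
          rw [Int.norm_eq_abs]; exact_mod_cast Int.one_le_abs hi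
      _ ≤ ‖q‖ := norm_le_pi_norm q i
  have hq0 : (0 : ℝ) < ‖q‖ := lt_of_lt_of_le one_pos hq1
  set S : ℝ := ∑ i, (q i : ℝ) * ξ ^ ((i : ℕ) + 1) with hS
  have hT : |S| ≤ E * ‖q‖ := by
    rw [hS]
    refine (Finset.abs_sum_le_sum_abs _ _).trans ?_
    have hterm : ∀ i : Fin n, |(q i : ℝ) * ξ ^ ((i : ℕ) + 1)| ≤ ‖q‖ * Mξ ^ n := by
      intro i
      rw [abs_mul, abs_pow]
      refine mul_le_mul ?_ ?_ (by positivity) (le_of_lt hq0)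
      · calc |(q i : ℝ)| = ‖q i‖ := by simp [Int.norm_eq_abs]
          _ ≤ ‖q‖ := norm_le_pi_norm q i
      · refine (pow_le_pow_left₀ (abs_nonneg _) (by rw [hMξ]; linarith) _).trans
          (pow_le_pow_right₀ hMξ1 (i.isLt : (i : ℕ) + 1 ≤ n))
    calc ∑ i, |(q i : ℝ) * ξ ^ ((i : ℕ) + 1)| ≤ ∑ _i : Fin n, ‖q‖ * Mξ ^ n :=
          Finset.sum_le_sum fun i _ => hterm i
      _ = E * ‖q‖ := by
          rw [Finset.sum_const, Finset.card_univ, Fintype.card_fin, hE]; ring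
  by_cases hp : |(p : ℝ)| ≤ D * ‖q‖
  · -- small p : use the key inequality
    have hkey := key p q hq
    rw [← hS] at hkey
    set H : ℝ := max ‖q‖ |(p : ℝ)| with hH
    have hH0 : 0 ≤ H := le_trans (le_of_lt hq0) (le_max_left _ _)
    have hHD : H ≤ D * ‖q‖ := max_le (le_mul_of_one_le_left (le_of_lt hq0) hD1) hp
    have hHn : H ^ n ≤ D ^ n * ‖q‖ ^ n := by
      calc H ^ n ≤ (D * ‖q‖) ^ n := pow_le_pow_left₀ hH0 hHD n
        _ = D ^ n * ‖q‖ ^ n := mul_pow _ _ _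
    have habs : (0 : ℝ) ≤ |S + (p : ℝ)| := abs_nonneg _
    have hA0 : (0 : ℝ) < A ^ n := by positivity
    have hB0' : (0 : ℝ) < B ^ n := by positivity
    have hkey2 : 1 ≤ A ^ n * B ^ n * (D ^ n * ‖q‖ ^ n) * |S + (p : ℝ)| := by
      have h1 : A ^ n * (B * H) ^ n * |S + (p : ℝ)|
          ≤ A ^ n * B ^ n * (D ^ n * ‖q‖ ^ n) * |S + (p : ℝ)| := by
        rw [mul_pow]
        have : A ^ n * (B ^ n * H ^ n) ≤ A ^ n * B ^ n * (D ^ n * ‖q‖ ^ n) := by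
          rw [← mul_assoc]
          exact mul_le_mul_of_nonneg_left hHn (by positivity)
        exact mul_le_mul_of_nonneg_right this habs
      linarith [hkey]
    rw [div_le_iff₀ (by positivity)]
    calc min κ₁ 1 ≤ κ₁ := min_le_left _ _
      _ ≤ |S + (p : ℝ)| * ‖q‖ ^ n := by
          rw [hκ₁, div_le_iff₀ (by positivity)]
          calc (1 : ℝ) ≤ A ^ n * B ^ n * (D ^ n * ‖q‖ ^ n) * |S + (p : ℝ)| := hkey2
            _ = |S + (p : ℝ)| * ‖q‖ ^ n * (A ^ n * B ^ n * D ^ n) := by ring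
  · -- large p : the linear form itself is large
    push_neg at hp
    have h1 : |(p : ℝ)| ≤ |S + (p : ℝ)| + |S| := by
      calc |(p : ℝ)| = |(S + (p : ℝ)) + (-S)| := by rw [show (S + (p:ℝ)) + (-S) = (p:ℝ) by ring]
        _ ≤ |S + (p : ℝ)| + |(-S)| := abs_add_le _ _
        _ = |S + (p : ℝ)| + |S| := by rw [abs_neg]
    have h2 : (1 : ℝ) ≤ |S + (p : ℝ)| := by
      have : E * ‖q‖ + ‖q‖ = D * ‖q‖ := by rw [hD]; ring
      nlinarith [hT, hq1]
    calc min κ₁ 1 / ‖q‖ ^ n ≤ 1 / 1 := by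
          apply div_le_div₀ (by norm_num) (min_le_right _ _) one_pos
          exact one_le_pow₀ hq1
      _ ≤ |S + (p : ℝ)| := by rw [div_one]; exact h2
end

section
/- Let n, m ≥ 1 be integers. The set Bad(n,m) of badly approximable n×m real matrices, namely the set of n×m matrices Ξ with column vectors ξ_1,…,ξ_m ∈ ℝ^n such that liminf over q ∈ ℤ^n with |q|_∞ → ∞ of |q|_∞^{n/m} · min_{p ∈ ℤ^m} max_{1≤j≤m} |q_1ξ_{1,j} + … + q_nξ_{n,j} − p_j| is strictly positive, has nm-dimensional Lebesgue measure zero. -/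
open MeasureTheory


open MeasureTheory Metric Filter NNReal
open scoped ENNReal

namespace Stmt18

/-- round is the nearest integer. -/
lemma abs_sub_round_le (x : ℝ) (p : ℤ) : |x - round x| ≤ |x - (p : ℝ)| := by
  rcases eq_or_ne p (round x) with rfl | hp
  · exact le_rfl
  · have h1 : |x - (round x : ℝ)| ≤ 1 / 2 := abs_sub_round x
    have h2 : (1 : ℝ) ≤ |((round x : ℤ) : ℝ) - (p : ℝ)| := by
      have : (1 : ℤ) ≤ |round x - p| := Int.one_le_abs (sub_ne_zero.mpr (Ne.symm hp))
      calc (1:ℝ) = ((1:ℤ):ℝ) := by norm_num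
        _ ≤ (|round x - p| : ℤ) := by exact_mod_cast this
        _ = |((round x : ℤ) : ℝ) - (p : ℝ)| := by push_cast [Int.cast_abs]; ring_nf
    have h3 : |((round x : ℤ) : ℝ) - (p : ℝ)| ≤ |x - round x| + |x - p| := by
      have := abs_sub_abs_le_abs_sub ((round x : ℝ) - p) 0
      calc |((round x:ℤ):ℝ) - (p:ℝ)| = |(x - p) - (x - round x)| := by ring_nf
        _ ≤ |x - p| + |x - round x| := abs_sub (x - p) (x - round x)
        _ = |x - round x| + |x - p| := add_comm _ _
    linarith

variable {n m : ℕ}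

noncomputable def Dq (Ξ : Fin n → Fin m → ℝ) (q : Fin n → ℤ) : ℝ :=
  ⨅ p : Fin m → ℤ, ⨆ j : Fin m, |∑ i, (q i : ℝ) * Ξ i j - (p j : ℝ)|

lemma sup_abs_nonneg (hm : 0 < m) (g : Fin m → ℝ) : 0 ≤ ⨆ j : Fin m, |g j| := by
  haveI : Nonempty (Fin m) := Fin.pos_iff_nonempty.mp hm
  exact Real.iSup_nonneg fun j => abs_nonneg _

lemma Dq_nonneg (hm : 0 < m) (Ξ : Fin n → Fin m → ℝ) (q : Fin n → ℤ) : 0 ≤ Dq Ξ q := by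
  haveI : Nonempty (Fin m) := Fin.pos_iff_nonempty.mp hm
  exact le_ciInf fun p => sup_abs_nonneg hm _

lemma Dq_le (hm : 0 < m) (Ξ : Fin n → Fin m → ℝ) (q : Fin n → ℤ) (p : Fin m → ℤ) :
    Dq Ξ q ≤ ⨆ j : Fin m, |∑ i, (q i : ℝ) * Ξ i j - (p j : ℝ)| := by
  apply ciInf_le
  exact ⟨0, by rintro x ⟨p', rfl⟩; exact sup_abs_nonneg hm _⟩

lemma Dq_eq (hm : 0 < m) (Ξ : Fin n → Fin m → ℝ) (q : Fin n → ℤ) :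
    Dq Ξ q = ⨆ j : Fin m, |(∑ i, (q i : ℝ) * Ξ i j) - (round (∑ i, (q i : ℝ) * Ξ i j) : ℝ)| := by
  haveI : Nonempty (Fin m) := Fin.pos_iff_nonempty.mp hm
  apply le_antisymm
  · exact Dq_le hm Ξ q (fun j => round (∑ i, (q i : ℝ) * Ξ i j))
  · apply le_ciInf
    intro p
    apply ciSup_le
    intro j
    exact le_trans (abs_sub_round_le _ (p j)) (le_ciSup (f := fun j => |∑ i, (q i : ℝ) * Ξ i j - (p j : ℝ)|) (Finite.bddAbove_range _) j)

lemma abs_le_Dq (hm : 0 < m) (Ξ : Fin n → Fin m → ℝ) (q : Fin n → ℤ) (j : Fin m) :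
    |(∑ i, (q i : ℝ) * Ξ i j) - (round (∑ i, (q i : ℝ) * Ξ i j) : ℝ)| ≤ Dq Ξ q := by
  rw [Dq_eq hm]
  exact le_ciSup (f := fun j => |(∑ i, (q i : ℝ) * Ξ i j) - (round (∑ i, (q i : ℝ) * Ξ i j) : ℝ)|) (Finite.bddAbove_range _) j


lemma v_diff_bound (Ξ Ξ' : Fin n → Fin m → ℝ) (q : Fin n → ℤ) (j : Fin m) :
    |(∑ i, (q i : ℝ) * Ξ i j) - ∑ i, (q i : ℝ) * Ξ' i j| ≤ (∑ i, |(q i : ℝ)|) * dist Ξ Ξ' := by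
  rw [← Finset.sum_sub_distrib]
  calc |∑ i, ((q i : ℝ) * Ξ i j - (q i : ℝ) * Ξ' i j)|
      ≤ ∑ i, |(q i : ℝ) * Ξ i j - (q i : ℝ) * Ξ' i j| := Finset.abs_sum_le_sum_abs _ _
    _ ≤ ∑ i, |(q i : ℝ)| * dist Ξ Ξ' := by
        apply Finset.sum_le_sum
        intro i _
        rw [← mul_sub, abs_mul]
        apply mul_le_mul_of_nonneg_left _ (abs_nonneg _)
        calc |Ξ i j - Ξ' i j| = dist (Ξ i j) (Ξ' i j) := (Real.dist_eq _ _).symm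
          _ ≤ dist (Ξ i) (Ξ' i) := dist_le_pi_dist (Ξ i) (Ξ' i) j
          _ ≤ dist Ξ Ξ' := dist_le_pi_dist Ξ Ξ' i
    _ = (∑ i, |(q i : ℝ)|) * dist Ξ Ξ' := (Finset.sum_mul _ _ _).symm

lemma Dq_le_Dq_add (hm : 0 < m) (Ξ Ξ' : Fin n → Fin m → ℝ) (q : Fin n → ℤ) :
    Dq Ξ q ≤ Dq Ξ' q + (∑ i, |(q i : ℝ)|) * dist Ξ Ξ' := by
  haveI : Nonempty (Fin m) := Fin.pos_iff_nonempty.mp hm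
  refine le_trans (Dq_le hm Ξ q (fun j => round (∑ i, (q i : ℝ) * Ξ' i j))) ?_
  apply ciSup_le
  intro j
  calc |∑ i, (q i : ℝ) * Ξ i j - (round (∑ i, (q i : ℝ) * Ξ' i j) : ℝ)|
      ≤ |(∑ i, (q i : ℝ) * Ξ' i j) - (round (∑ i, (q i : ℝ) * Ξ' i j) : ℝ)|
        + |(∑ i, (q i : ℝ) * Ξ i j) - ∑ i, (q i : ℝ) * Ξ' i j| := by
          have := abs_sub_le (∑ i, (q i : ℝ) * Ξ i j) (∑ i, (q i : ℝ) * Ξ' i j)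
            ((round (∑ i, (q i : ℝ) * Ξ' i j) : ℝ))
          linarith [abs_sub_comm (∑ i, (q i : ℝ) * Ξ i j) (∑ i, (q i : ℝ) * Ξ' i j)]
    _ ≤ Dq Ξ' q + (∑ i, |(q i : ℝ)|) * dist Ξ Ξ' :=
        add_le_add (abs_le_Dq hm Ξ' q j) (v_diff_bound Ξ Ξ' q j)

lemma continuous_Dq (hm : 0 < m) (q : Fin n → ℤ) :
    Continuous fun Ξ : Fin n → Fin m → ℝ => Dq Ξ q := by
  apply (LipschitzWith.of_dist_le_mul (K := Real.toNNReal (∑ i, |(q i : ℝ)|))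
    (f := fun Ξ : Fin n → Fin m → ℝ => Dq Ξ q) ?_).continuous
  intro Ξ Ξ'
  show dist (Dq Ξ q) (Dq Ξ' q) ≤ _
  have hK : ((Real.toNNReal (∑ i, |(q i : ℝ)|) : ℝ≥0) : ℝ) = ∑ i, |(q i : ℝ)| :=
    Real.coe_toNNReal _ (Finset.sum_nonneg fun i _ => abs_nonneg _)
  rw [Real.dist_eq, hK, abs_sub_le_iff]
  constructor
  · linarith [Dq_le_Dq_add hm Ξ Ξ' q]
  · have h2 := Dq_le_Dq_add hm Ξ' Ξ q
    rw [dist_comm] at h2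
    linarith

lemma Dq_smul_eq_zero (hm : 0 < m) (Ξ : Fin n → Fin m → ℝ) (q : Fin n → ℤ)
    (hq0 : Dq Ξ q = 0) (k : ℤ) : Dq Ξ (k • q) = 0 := by
  haveI : Nonempty (Fin m) := Fin.pos_iff_nonempty.mp hm
  have hint : ∀ j, (∑ i, (q i : ℝ) * Ξ i j) = (round (∑ i, (q i : ℝ) * Ξ i j) : ℝ) := by
    intro j
    have h1 := abs_le_Dq hm Ξ q j
    rw [hq0] at h1
    have := abs_nonneg ((∑ i, (q i : ℝ) * Ξ i j) - (round (∑ i, (q i : ℝ) * Ξ i j) : ℝ))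
    have : |(∑ i, (q i : ℝ) * Ξ i j) - (round (∑ i, (q i : ℝ) * Ξ i j) : ℝ)| = 0 := le_antisymm h1 this
    have := abs_eq_zero.mp this
    linarith
  apply le_antisymm _ (Dq_nonneg hm Ξ _)
  refine le_trans (Dq_le hm Ξ _ (fun j => k * round (∑ i, (q i : ℝ) * Ξ i j))) ?_
  apply ciSup_le
  intro j
  have : ∑ i, ((k • q) i : ℝ) * Ξ i j = k * ∑ i, (q i : ℝ) * Ξ i j := by
    rw [Finset.mul_sum]
    apply Finset.sum_congr rfl
    intro i _
    simp only [Pi.smul_apply, smul_eq_mul]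
    push_cast
    ring
  rw [this, hint j]
  push_cast
  simp

lemma one_le_norm_int_vec {q : Fin n → ℤ} (hq : q ≠ 0) : (1 : ℝ) ≤ ‖q‖ := by
  obtain ⟨i, hi⟩ := Function.ne_iff.mp hq
  calc (1 : ℝ) ≤ ‖q i‖ := by
        rw [Int.norm_eq_abs]
        exact_mod_cast Int.one_le_abs (by simpa using hi)
    _ ≤ ‖q‖ := norm_le_pi_norm q i

lemma sum_abs_le_card_norm (q : Fin n → ℤ) : ∑ i, |(q i : ℝ)| ≤ (n : ℝ) * ‖q‖ := by
  calc ∑ i, |(q i : ℝ)| ≤ ∑ _i : Fin n, ‖q‖ := by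
        apply Finset.sum_le_sum
        intro i _
        rw [← Int.norm_eq_abs]
        exact norm_le_pi_norm q i
    _ = (n : ℝ) * ‖q‖ := by simp [Finset.sum_const, nsmul_eq_mul]

lemma exists_norm_coord (hn : 0 < n) (q : Fin n → ℤ) : ∃ i, ‖q‖ = |(q i : ℝ)| := by
  haveI : Nonempty (Fin n) := Fin.pos_iff_nonempty.mp hn
  obtain ⟨i, _, hi⟩ := Finset.exists_mem_eq_sup Finset.univ Finset.univ_nonempty
    (fun i => ‖q i‖₊)
  refine ⟨i, ?_⟩
  rw [Pi.norm_def, hi, ← Int.norm_eq_abs]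
  rfl


lemma dirichlet (hn : 0 < n) (hm : 0 < m) (Ξ : Fin n → Fin m → ℝ) (Q : ℝ) (hQ : 1 ≤ Q) :
    ∃ q : Fin n → ℤ, q ≠ 0 ∧ ‖q‖ ≤ Q ∧ Dq Ξ q ≤ 2 * Q ^ (-((n : ℝ) / m)) := by
  haveI : Nonempty (Fin m) := Fin.pos_iff_nonempty.mp hm
  have hQ0 : (0 : ℝ) < Q := lt_of_lt_of_le one_pos hQ
  set e : ℝ := (n : ℝ) / m with he
  have he0 : 0 ≤ e := div_nonneg (Nat.cast_nonneg n) (Nat.cast_nonneg m)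
  set x : ℝ := Q ^ e with hx
  have hx1 : 1 ≤ x := by
    calc (1:ℝ) = 1 ^ e := (Real.one_rpow e).symm
      _ ≤ Q ^ e := Real.rpow_le_rpow zero_le_one hQ he0
  have hx0 : 0 < x := lt_of_lt_of_le one_pos hx1
  set N : ℕ := ⌊Q⌋₊ with hN
  have hN1 : 1 ≤ N := Nat.le_floor (by exact_mod_cast hQ)
  set k : ℕ := ⌊x⌋₊ with hk
  have hk1 : 1 ≤ k := Nat.le_floor (by exact_mod_cast hx1)
  have hk0 : (0:ℝ) < k := by exact_mod_cast hk1
  have hkx : (k : ℝ) ≤ x := Nat.floor_le hx0.le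
  have hhalf : x / 2 ≤ k := by
    rcases le_or_gt x 2 with h | h
    · have : (1:ℝ) ≤ (k:ℝ) := by exact_mod_cast hk1
      linarith
    · have : x - 1 < ⌊x⌋₊ := Nat.sub_one_lt_floor x
      have : x - 1 < (k:ℝ) := this
      linarith
  -- cardinality comparison
  have hcard : k ^ m < (N + 1) ^ n := by
    have h1 : (k : ℝ) ^ m ≤ x ^ m := pow_le_pow_left₀ hk0.le hkx m
    have h2 : x ^ m = Q ^ n := by
      rw [hx, ← Real.rpow_natCast (Q ^ e) m, ← Real.rpow_mul hQ0.le]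
      have : e * m = n := by
        rw [he]
        field_simp
      rw [this, Real.rpow_natCast]
    have h3 : Q ^ n < ((N:ℝ) + 1) ^ n :=
      pow_lt_pow_left₀ (Nat.lt_floor_add_one Q) hQ0.le (by omega)
    have : ((k:ℝ)) ^ m < ((N:ℝ) + 1) ^ n := by
      rw [h2] at h1
      exact lt_of_le_of_lt h1 h3
    exact_mod_cast this
  -- pigeonhole
  set v : (Fin n → ℤ) → Fin m → ℝ := fun q j => ∑ i, (q i : ℝ) * Ξ i j with hv
  have hfracts : ∀ (q : Fin n → ℤ) (j : Fin m), ⌊Int.fract (v q j) * k⌋₊ < k := by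
    intro q j
    have h1 : Int.fract (v q j) * k < k := by
      have := Int.fract_lt_one (v q j)
      calc Int.fract (v q j) * k < 1 * k := by
            exact mul_lt_mul_of_pos_right this hk0
        _ = k := one_mul _
    rw [Nat.floor_lt (mul_nonneg (Int.fract_nonneg _) hk0.le)]
    exact h1
  set g : (Fin n → ℤ) → (Fin m → Fin k) := fun q j => ⟨⌊Int.fract (v q j) * k⌋₊, hfracts q j⟩
    with hg
  set S : Finset (Fin n → ℤ) := Finset.Icc 0 (fun _ => (N : ℤ)) with hS
  have hScard : S.card = (N + 1) ^ n := by
    rw [hS, Pi.card_Icc]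
    simp [Int.card_Icc]
  have hpigeon : ∃ q₁ ∈ S, ∃ q₂ ∈ S, q₁ ≠ q₂ ∧ g q₁ = g q₂ := by
    apply Finset.exists_ne_map_eq_of_card_lt_of_maps_to (t := Finset.univ)
    · rw [hScard]
      calc (Finset.univ : Finset (Fin m → Fin k)).card = k ^ m := by
            simp [Fintype.card_fun]
        _ < (N + 1) ^ n := hcard
    · intro a _
      exact Finset.mem_univ _
  obtain ⟨q₁, hq₁, q₂, hq₂, hne, hgeq⟩ := hpigeon
  refine ⟨q₁ - q₂, sub_ne_zero.mpr hne, ?_, ?_⟩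
  · -- norm bound
    rw [pi_norm_le_iff_of_nonneg hQ0.le]
    intro i
    have h₁ := (Finset.mem_Icc.mp hq₁)
    have h₂ := (Finset.mem_Icc.mp hq₂)
    have e₁ : (0:ℤ) ≤ q₁ i := h₁.1 i
    have e₂ : q₁ i ≤ (N:ℤ) := h₁.2 i
    have e₃ : (0:ℤ) ≤ q₂ i := h₂.1 i
    have e₄ : q₂ i ≤ (N:ℤ) := h₂.2 i
    rw [Pi.sub_apply, Int.norm_eq_abs]
    have : |q₁ i - q₂ i| ≤ (N:ℤ) := abs_le.mpr ⟨by omega, by omega⟩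
    calc |((q₁ i - q₂ i : ℤ) : ℝ)| = ((|q₁ i - q₂ i| : ℤ) : ℝ) := by
          rw [Int.cast_abs]
      _ ≤ ((N:ℤ):ℝ) := by exact_mod_cast this
      _ ≤ Q := by
          push_cast
          exact Nat.floor_le hQ0.le
  · -- approximation bound
    refine le_trans (Dq_le hm Ξ _ (fun j => ⌊v q₁ j⌋ - ⌊v q₂ j⌋)) ?_
    apply ciSup_le
    intro j
    have hsum : ∑ i, (((q₁ - q₂) i : ℤ) : ℝ) * Ξ i j = v q₁ j - v q₂ j := by
      rw [hv, ← Finset.sum_sub_distrib]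
      apply Finset.sum_congr rfl
      intro i _
      push_cast [Pi.sub_apply]
      ring
    have hkey : |Int.fract (v q₁ j) - Int.fract (v q₂ j)| < 1 / k := by
      have hb := congrFun hgeq j
      have hb' : ⌊Int.fract (v q₁ j) * k⌋₊ = ⌊Int.fract (v q₂ j) * k⌋₊ := by
        have := congrArg Fin.val hb
        simpa [hg] using this
      have h₁a : ((⌊Int.fract (v q₁ j) * k⌋₊ : ℕ):ℝ) ≤ Int.fract (v q₁ j) * k :=
        Nat.floor_le (mul_nonneg (Int.fract_nonneg _) hk0.le)
      have h₁b : Int.fract (v q₁ j) * k < ((⌊Int.fract (v q₁ j) * k⌋₊ : ℕ):ℝ) + 1 :=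
        Nat.lt_floor_add_one _
      have h₂a : ((⌊Int.fract (v q₁ j) * k⌋₊ : ℕ):ℝ) ≤ Int.fract (v q₂ j) * k := by
        rw [hb']
        exact Nat.floor_le (mul_nonneg (Int.fract_nonneg _) hk0.le)
      have h₂b : Int.fract (v q₂ j) * k < ((⌊Int.fract (v q₁ j) * k⌋₊ : ℕ):ℝ) + 1 := by
        rw [hb']
        exact Nat.lt_floor_add_one _
      rw [abs_lt]
      have hA : (Int.fract (v q₁ j) - Int.fract (v q₂ j)) * k < 1 := by ring_nf; linarith
      have hB : (Int.fract (v q₂ j) - Int.fract (v q₁ j)) * k < 1 := by ring_nf; linarith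
      constructor
      · have := (lt_div_iff₀ hk0).mpr hB
        linarith
      · exact (lt_div_iff₀ hk0).mpr hA
    have hfr : v q₁ j - v q₂ j - ((⌊v q₁ j⌋ - ⌊v q₂ j⌋ : ℤ) : ℝ)
        = Int.fract (v q₁ j) - Int.fract (v q₂ j) := by
      unfold Int.fract
      push_cast
      ring
    have h1k : 1 / (k:ℝ) ≤ 2 * Q ^ (-e) := by
      rw [Real.rpow_neg hQ0.le]
      rw [div_le_iff₀ hk0]
      have hx1' : (x)⁻¹ * x = 1 := inv_mul_cancel₀ (ne_of_gt hx0)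
      have : 2 * (x)⁻¹ * (x/2) ≤ 2 * (x)⁻¹ * k :=
        mul_le_mul_of_nonneg_left hhalf (by positivity)
      calc (1:ℝ) = 2 * (x)⁻¹ * (x/2) := by field_simp
        _ ≤ 2 * (x)⁻¹ * k := this
        _ = 2 * (Q ^ e)⁻¹ * k := by rw [hx]
    calc |∑ i, (((q₁ - q₂) i : ℤ) : ℝ) * Ξ i j - ((⌊v q₁ j⌋ - ⌊v q₂ j⌋ : ℤ) : ℝ)|
        = |Int.fract (v q₁ j) - Int.fract (v q₂ j)| := by rw [hsum, hfr]
      _ ≤ 1 / k := le_of_lt hkey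
      _ ≤ 2 * Q ^ (-e) := h1k


def BadC (n m : ℕ) (ε : ℝ) : Set (Fin n → Fin m → ℝ) :=
  {Ξ | ∀ q : Fin n → ℤ, q ≠ 0 → ε * ‖q‖ ^ (-((n : ℝ) / m)) ≤ Dq Ξ q}

set_option maxHeartbeats 1000000 in
lemma porosity (hn : 0 < n) (hm : 0 < m) {ε : ℝ} (hε : 0 < ε) (hε1 : ε ≤ 1) :
    ∃ c : ℝ, 0 < c ∧ c ≤ 1 ∧ ∀ Ξ₀ ∈ BadC n m ε, ∀ r : ℝ, 0 < r → r ≤ 1 →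
      ∃ Ξ₁ : Fin n → Fin m → ℝ,
        closedBall Ξ₁ (c * r) ⊆ closedBall Ξ₀ r ∧ closedBall Ξ₁ (c * r) ∩ BadC n m ε = ∅ := by
  have hn0 : (0:ℝ) < n := by exact_mod_cast hn
  have hm0 : (0:ℝ) < m := by exact_mod_cast hm
  set α : ℝ := (n : ℝ) / m with hα
  set γ : ℝ := (m : ℝ) / n with hγ
  have hα0 : 0 < α := div_pos hn0 hm0
  have hγ0 : 0 < γ := div_pos hm0 hn0
  have hαγ : α * γ = 1 := by
    rw [hα, hγ]
    field_simp
  set β : ℝ := (ε / 2) ^ γ with hβ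
  have hβ0 : 0 < β := Real.rpow_pos_of_pos (by linarith) γ
  have hβ1 : β ≤ 1 := Real.rpow_le_one (by linarith) (by linarith) hγ0.le
  set K : ℝ := 2 / β + 1 with hK
  have hK3 : 3 ≤ K := by
    have : 2 ≤ 2 / β := by
      rw [le_div_iff₀ hβ0]
      nlinarith
    rw [hK]
    linarith
  have hK0 : 0 < K := by rw [hK]; positivity
  have hn1 : (1:ℝ) ≤ n := by exact_mod_cast hn
  set c : ℝ := ε / (2 * n * K) with hc
  have hc0 : 0 < c := by positivity
  have hc1 : c ≤ 1 := by
    rw [hc, div_le_one (by positivity)]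
    nlinarith
  clear_value α γ β K c
  refine ⟨c, hc0, hc1, ?_⟩
  intro Ξ₀ hΞ₀ r hr hr1
  haveI : Nonempty (Fin m) := Fin.pos_iff_nonempty.mp hm
  have hKr1 : 1 ≤ K / r := by
    rw [le_div_iff₀ hr]
    linarith
  have hKr0 : (0:ℝ) < K / r := by positivity
  set Q : ℝ := (K / r) ^ (α + 1)⁻¹ with hQ
  have hQ1 : 1 ≤ Q := by
    calc (1:ℝ) = 1 ^ (α + 1)⁻¹ := (Real.one_rpow _).symm
      _ ≤ (K / r) ^ (α + 1)⁻¹ := Real.rpow_le_rpow zero_le_one hKr1 (by positivity)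
  have hQ0 : (0:ℝ) < Q := lt_of_lt_of_le one_pos hQ1
  have hQpow : Q ^ (α + 1) = K / r := by
    rw [hQ, ← Real.rpow_mul hKr0.le, inv_mul_cancel₀ (by positivity), Real.rpow_one]
  have hQαQ : Q ^ α * Q = K / r := by
    rw [← Real.rpow_add_one hQ0.ne' α]
    exact hQpow
  have hβne : β ≠ 0 := ne_of_gt hβ0
  have hKne : K ≠ 0 := ne_of_gt hK0
  have hrne : r ≠ 0 := ne_of_gt hr
  have hnne : (n:ℝ) ≠ 0 := ne_of_gt hn0
  clear_value Q
  obtain ⟨q, hq0, hqQ, hqD₀⟩ := dirichlet hn hm Ξ₀ Q hQ1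
  have hqD : Dq Ξ₀ q ≤ 2 * Q ^ (-α) := by rw [hα]; exact hqD₀
  have hqn1 : (1:ℝ) ≤ ‖q‖ := one_le_norm_int_vec hq0
  have hqnpos : (0:ℝ) < ‖q‖ := lt_of_lt_of_le one_pos hqn1
  have hQα0 : (0:ℝ) < Q ^ α := Real.rpow_pos_of_pos hQ0 α
  have hqα0 : (0:ℝ) < ‖q‖ ^ α := Real.rpow_pos_of_pos hqnpos α
  have hlow : ε * ‖q‖ ^ (-α) ≤ Dq Ξ₀ q := by rw [hα]; exact hΞ₀ q hq0
  have hcross : ε * Q ^ α ≤ 2 * ‖q‖ ^ α := by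
    have h1 : ε / ‖q‖ ^ α ≤ 2 / Q ^ α := by
      rw [div_eq_mul_inv, div_eq_mul_inv, ← Real.rpow_neg hqnpos.le, ← Real.rpow_neg hQ0.le]
      exact le_trans hlow hqD
    exact (div_le_div_iff₀ hqα0 hQα0).mp h1
  have hβQq : β * Q ≤ ‖q‖ := by
    have h2 : (ε/2) * Q ^ α ≤ ‖q‖ ^ α := by linarith
    have h3 : ((ε/2) * Q ^ α) ^ γ ≤ (‖q‖ ^ α) ^ γ :=
      Real.rpow_le_rpow (by positivity) h2 hγ0.le
    have h4 : (‖q‖ ^ α) ^ γ = ‖q‖ := by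
      rw [← Real.rpow_mul hqnpos.le, hαγ, Real.rpow_one]
    have h5 : ((ε/2) * Q ^ α) ^ γ = β * Q := by
      rw [Real.mul_rpow (by linarith) hQα0.le, ← Real.rpow_mul hQ0.le, hαγ, Real.rpow_one, hβ]
    rw [h4, h5] at h3
    exact h3
  obtain ⟨i₀, hi₀⟩ := exists_norm_coord hn q
  have hqi₀ : (0:ℝ) < |(q i₀ : ℝ)| := hi₀ ▸ hqnpos
  have hqi0ne : (q i₀ : ℝ) ≠ 0 := abs_pos.mp hqi₀
  set v : Fin m → ℝ := fun j => ∑ i, (q i : ℝ) * Ξ₀ i j with hv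
  set w : Fin m → ℝ := fun j => (round (v j) : ℝ) - v j with hw
  have hwb : ∀ j, |w j| ≤ 2 * Q ^ (-α) := by
    intro j
    calc |w j| = |v j - (round (v j) : ℝ)| := by rw [hw, abs_sub_comm]
      _ ≤ Dq Ξ₀ q := abs_le_Dq hm Ξ₀ q j
      _ ≤ 2 * Q ^ (-α) := hqD
  set Ξ₁ : Fin n → Fin m → ℝ :=
    fun i j => Ξ₀ i j + (if i = i₀ then w j / (q i₀ : ℝ) else 0) with hΞ₁
  have hsum1 : ∀ j, ∑ i, (q i : ℝ) * Ξ₁ i j = (round (v j) : ℝ) := by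
    intro j
    have hterm : ∀ i : Fin n, (q i : ℝ) * Ξ₁ i j
        = (q i : ℝ) * Ξ₀ i j + (if i = i₀ then (q i : ℝ) * (w j / (q i₀ : ℝ)) else 0) := by
      intro i
      show (q i : ℝ) * (Ξ₀ i j + (if i = i₀ then w j / (q i₀ : ℝ) else 0)) = _
      rcases eq_or_ne i i₀ with h | h
      · rw [if_pos h, if_pos h]
        ring
      · rw [if_neg h, if_neg h]
        ring
    rw [Finset.sum_congr rfl fun i _ => hterm i, Finset.sum_add_distrib,
      Finset.sum_ite_eq' Finset.univ i₀ fun i => (q i : ℝ) * (w j / (q i₀ : ℝ))]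
    simp only [Finset.mem_univ, if_true]
    rw [mul_comm ((q i₀ : ℝ)) _, div_mul_cancel₀ _ hqi0ne]
    rw [hw]
    ring
  have hdistΞ₁ : dist Ξ₁ Ξ₀ ≤ 2 * r / (β * K) := by
    have hb : (0:ℝ) ≤ 2 * r / (β * K) := by positivity
    rw [dist_pi_le_iff hb]
    intro i
    rw [dist_pi_le_iff hb]
    intro j
    rw [Real.dist_eq]
    show |Ξ₀ i j + (if i = i₀ then w j / (q i₀ : ℝ) else 0) - Ξ₀ i j| ≤ _
    rw [add_sub_cancel_left]
    rcases eq_or_ne i i₀ with hii | hii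
    · rw [if_pos hii]
      rw [abs_div]
      have hden : β * Q ≤ |(q i₀ : ℝ)| := hi₀ ▸ hβQq
      have hd1 : |w j| / |(q i₀ : ℝ)| ≤ (2 * Q ^ (-α)) / (β * Q) :=
        div_le_div₀ (by positivity) (hwb j) (by positivity) hden
      refine le_trans hd1 (le_of_eq ?_)
      rw [Real.rpow_neg hQ0.le]
      have hQαne : (Q:ℝ) ^ α ≠ 0 := ne_of_gt hQα0
      have hQK : r * (Q ^ α * Q) = K := by
        rw [hQαQ]
        field_simp
      rw [← hQK, div_eq_div_iff (by positivity) (by positivity)]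
      field_simp
    · rw [if_neg hii, abs_zero]
      positivity
  refine ⟨Ξ₁, ?_, ?_⟩
  · intro Ξ hΞ
    rw [mem_closedBall] at hΞ ⊢
    have h1 : dist Ξ Ξ₀ ≤ dist Ξ Ξ₁ + dist Ξ₁ Ξ₀ := dist_triangle _ _ _
    have e1 : 2 * r / (β * K) = r - r / K := by
      rw [hK]
      have h2β : (2:ℝ) / β + 1 ≠ 0 := by positivity
      field_simp
      ring
    have hcK : c * K = ε / (2 * n) := by
      rw [hc]
      field_simp
    have h2 : c * r + 2 * r / (β * K) ≤ r := by
      rw [e1]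
      have h3 : c * r * K ≤ r / 2 := by
        have : c * K ≤ 1 / 2 := by
          rw [hcK, div_le_div_iff₀ (by positivity) (by norm_num)]
          nlinarith
        nlinarith
      have h4 : c * r ≤ r / K := by
        rw [le_div_iff₀ hK0]
        linarith [h3, hr]
      have hrK : 0 < r / K := by positivity
      linarith
    linarith
  · rw [Set.eq_empty_iff_forall_notMem]
    rintro Ξ ⟨hΞball, hΞbad⟩
    have hρ : dist Ξ Ξ₁ ≤ c * r := mem_closedBall.mp hΞball
    have hDb : Dq Ξ q ≤ (n:ℝ) * ‖q‖ * (c * r) := by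
      refine le_trans (Dq_le hm Ξ q fun j => round (v j)) ?_
      apply ciSup_le
      intro j
      calc |∑ i, (q i : ℝ) * Ξ i j - (round (v j) : ℝ)|
          = |(∑ i, (q i : ℝ) * Ξ i j) - ∑ i, (q i : ℝ) * Ξ₁ i j| := by rw [hsum1 j]
        _ ≤ (∑ i, |(q i : ℝ)|) * dist Ξ Ξ₁ := v_diff_bound Ξ Ξ₁ q j
        _ ≤ ((n:ℝ) * ‖q‖) * (c * r) := by
            apply mul_le_mul (sum_abs_le_card_norm q) hρ dist_nonneg (by positivity)
    have hQinv : Q ^ (-α) = r * Q / K := by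
      rw [Real.rpow_neg hQ0.le]
      have hQα : Q ^ α = K / (r * Q) := by
        rw [eq_div_iff (by positivity)]
        calc Q ^ α * (r * Q) = Q ^ α * Q * r := by ring
          _ = K / r * r := by rw [hQαQ]
          _ = K := by field_simp
      rw [hQα]
      field_simp
    have h1 : (n:ℝ) * ‖q‖ * (c * r) ≤ (n:ℝ) * Q * (c * r) := by
      have : (0:ℝ) ≤ (n:ℝ) * (c * r) := by positivity
      nlinarith
    have h2 : (n:ℝ) * Q * (c * r) = ε * (r * Q / K) / 2 := by
      rw [hc]
      field_simp
    have h3 : ε * Q ^ (-α) ≤ ε * ‖q‖ ^ (-α) := by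
      apply mul_le_mul_of_nonneg_left _ hε.le
      rw [Real.rpow_neg hQ0.le, Real.rpow_neg hqnpos.le]
      apply inv_anti₀ hqα0
      exact Real.rpow_le_rpow hqnpos.le hqQ hα0.le
    have h4 : ε * (r * Q / K) / 2 < ε * (r * Q / K) := by
      have : 0 < ε * (r * Q / K) := by positivity
      linarith
    rw [hQinv] at h3
    have hbad' : ε * ‖q‖ ^ (-α) ≤ Dq Ξ q := by rw [hα]; exact hΞbad q hq0
    linarith


lemma isClosed_badC (hm : 0 < m) (ε : ℝ) : IsClosed (BadC n m ε) := by
  have he : BadC n m ε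
      = ⋂ (q : Fin n → ℤ) (_ : q ≠ 0), {Ξ | ε * ‖q‖ ^ (-((n:ℝ)/m)) ≤ Dq Ξ q} := by
    ext Ξ
    simp [BadC, Set.mem_iInter]
  rw [he]
  exact isClosed_iInter fun q => isClosed_iInter fun _ =>
    isClosed_le continuous_const (continuous_Dq hm q)

set_option maxHeartbeats 1000000 in
lemma badC_null (hn : 0 < n) (hm : 0 < m) {ε : ℝ} (hε : 0 < ε) (hε1 : ε ≤ 1) :
    volume (BadC n m ε) = 0 := by
  classical
  set s : Set (Fin n → Fin m → ℝ) := BadC n m ε with hs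
  have hsm : MeasurableSet s := (isClosed_badC hm ε).measurableSet
  obtain ⟨c, hc0, hc1, hpor⟩ := porosity hn hm hε hε1
  set d : ℕ := Module.finrank ℝ (Fin n → Fin m → ℝ) with hd
  set V₁ : ℝ≥0∞ := volume (ball (0 : Fin n → Fin m → ℝ) 1) with hV₁
  have hV₁0 : 0 < V₁ := measure_ball_pos volume _ one_pos
  have hV₁top : V₁ < ⊤ := measure_ball_lt_top
  set oc : ℝ≥0∞ := ENNReal.ofReal (c ^ d) with hoc
  have hoc0 : oc ≠ 0 := by
    rw [hoc, ← pos_iff_ne_zero, ENNReal.ofReal_pos]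
    positivity
  have hkey : ∀ Ξ₀ ∈ s, ∀ r : ℝ, 0 < r → r ≤ 1 →
      volume (s ∩ closedBall Ξ₀ r) / volume (closedBall Ξ₀ r) ≤ 1 - oc := by
    intro Ξ₀ hΞ₀ r hr hr1
    obtain ⟨Ξ₁, hsub, hdisj⟩ := hpor Ξ₀ hΞ₀ r hr hr1
    have hVr : volume (closedBall Ξ₀ r) = ENNReal.ofReal (r ^ d) * V₁ :=
      Measure.addHaar_closedBall volume Ξ₀ hr.le
    have hVcr : volume (closedBall Ξ₁ (c * r)) = oc * (ENNReal.ofReal (r ^ d) * V₁) := by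
      rw [Measure.addHaar_closedBall volume Ξ₁ (by positivity), hoc,
        mul_pow, ENNReal.ofReal_mul (by positivity), mul_assoc]
    set V : ℝ≥0∞ := ENNReal.ofReal (r ^ d) * V₁ with hV
    have hVne0 : V ≠ 0 := by
      rw [hV]
      apply mul_ne_zero _ (ne_of_gt hV₁0)
      rw [← pos_iff_ne_zero, ENNReal.ofReal_pos]
      positivity
    have hVnetop : V ≠ ⊤ := by
      rw [hV]
      exact ENNReal.mul_ne_top ENNReal.ofReal_ne_top (ne_of_lt hV₁top)
    have hdisj2 : Disjoint (s ∩ closedBall Ξ₀ r) (closedBall Ξ₁ (c * r)) := by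
      rw [Set.disjoint_left]
      rintro x ⟨hxs, -⟩ hxb
      have hmem : x ∈ closedBall Ξ₁ (c * r) ∩ BadC n m ε := ⟨hxb, hxs⟩
      rw [hdisj] at hmem
      exact hmem
    have hunion : volume (s ∩ closedBall Ξ₀ r) + volume (closedBall Ξ₁ (c * r))
        ≤ volume (closedBall Ξ₀ r) := by
      rw [← measure_union hdisj2 measurableSet_closedBall]
      apply measure_mono
      exact Set.union_subset (Set.inter_subset_right) hsub
    have hA : volume (s ∩ closedBall Ξ₀ r) ≤ V - oc * V := by
      apply ENNReal.le_sub_of_add_le_right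
        (ENNReal.mul_ne_top (by rw [hoc]; exact ENNReal.ofReal_ne_top) hVnetop)
      rw [← hVcr, ← hVr]
      exact hunion
    have hsubmul : V - oc * V = (1 - oc) * V := by
      rw [ENNReal.sub_mul (fun _ _ => hVnetop), one_mul]
    calc volume (s ∩ closedBall Ξ₀ r) / volume (closedBall Ξ₀ r)
        ≤ (V - oc * V) / V := by
          rw [hVr]
          exact ENNReal.div_le_div_right hA V
      _ = (1 - oc) * V / V := by rw [hsubmul]
      _ = (1 - oc) * (V / V) := by rw [mul_div_assoc]
      _ = 1 - oc := by rw [ENNReal.div_self hVne0 hVnetop, mul_one]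
  have hnot : ∀ x ∈ s, ¬ Filter.Tendsto
      (fun r => volume (s ∩ closedBall x r) / volume (closedBall x r))
      (nhdsWithin (0:ℝ) (Set.Ioi 0)) (nhds 1) := by
    intro x hx ht
    have hev : ∀ᶠ r in nhdsWithin (0:ℝ) (Set.Ioi 0),
        volume (s ∩ closedBall x r) / volume (closedBall x r) ≤ 1 - oc := by
      filter_upwards [Ioc_mem_nhdsGT_of_mem (Set.mem_Ico.mpr ⟨le_refl (0:ℝ), one_pos⟩)]
      intro r hr
      exact hkey x hx r hr.1 hr.2
    have h1 : (1 : ℝ≥0∞) ≤ 1 - oc := le_of_tendsto ht hev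
    have h2 : (1 : ℝ≥0∞) - oc < 1 :=
      ENNReal.sub_lt_self ENNReal.one_ne_top one_ne_zero hoc0
    exact absurd (lt_of_le_of_lt h1 h2) (lt_irrefl _)
  have hae := Besicovitch.ae_tendsto_measure_inter_div volume s
  have hres : volume.restrict s {x | ¬ Filter.Tendsto
      (fun r => volume (s ∩ closedBall x r) / volume (closedBall x r))
      (nhdsWithin (0:ℝ) (Set.Ioi 0)) (nhds 1)} = 0 := ae_iff.mp hae
  have huniv : volume s = volume.restrict s Set.univ := (Measure.restrict_apply_univ _).symm
  rw [huniv]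
  have hcover : (Set.univ : Set (Fin n → Fin m → ℝ)) ⊆ {x | ¬ Filter.Tendsto
      (fun r => volume (s ∩ closedBall x r) / volume (closedBall x r))
      (nhdsWithin (0:ℝ) (Set.Ioi 0)) (nhds 1)} ∪ sᶜ := by
    intro x _
    by_cases hx : x ∈ s
    · exact Set.mem_union_left _ (hnot x hx)
    · exact Set.mem_union_right _ hx
  refine le_antisymm ?_ (zero_le)
  calc volume.restrict s Set.univ
      ≤ volume.restrict s ({x | ¬ Filter.Tendsto
          (fun r => volume (s ∩ closedBall x r) / volume (closedBall x r))
          (nhdsWithin (0:ℝ) (Set.Ioi 0)) (nhds 1)} ∪ sᶜ) := measure_mono hcover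
    _ ≤ volume.restrict s {x | ¬ Filter.Tendsto
          (fun r => volume (s ∩ closedBall x r) / volume (closedBall x r))
          (nhdsWithin (0:ℝ) (Set.Ioi 0)) (nhds 1)} + volume.restrict s sᶜ := measure_union_le _ _
    _ = 0 := by
        rw [hres, Measure.restrict_apply hsm.compl, Set.compl_inter_self, measure_empty]
        simp


set_option maxHeartbeats 1000000 in
lemma reduction (hn : 0 < n) (hm : 0 < m) :
    {Ξ : Fin n → Fin m → ℝ |
      0 < Filter.liminf (fun q : Fin n → ℤ => ‖q‖ ^ ((n : ℝ) / (m : ℝ)) * Dq Ξ q)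
        Filter.cofinite}
    ⊆ ⋃ k : ℕ, BadC n m (1 / ((k : ℝ) + 1)) := by
  classical
  intro Ξ hΞ
  simp only [Set.mem_setOf_eq] at hΞ
  set L : ℝ := Filter.liminf (fun q : Fin n → ℤ => ‖q‖ ^ ((n : ℝ) / (m : ℝ)) * Dq Ξ q)
    Filter.cofinite with hL
  set ε : ℝ := min L 1 / 2 with hε
  have hε0 : 0 < ε := by
    rw [hε]
    have : 0 < min L 1 := lt_min hΞ one_pos
    linarith
  have hε1 : ε ≤ 1 := by
    rw [hε]
    have : min L 1 ≤ 1 := min_le_right _ _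
    linarith
  have hεL : ε < L := by
    rw [hε]
    have h1 : 0 < min L 1 := lt_min hΞ one_pos
    have h2 : min L 1 ≤ L := min_le_left _ _
    linarith
  have hbdd : Filter.IsBoundedUnder (· ≥ ·) Filter.cofinite
      (fun q : Fin n → ℤ => ‖q‖ ^ ((n : ℝ) / (m : ℝ)) * Dq Ξ q) :=
    Filter.isBoundedUnder_of ⟨0, fun q =>
      mul_nonneg (Real.rpow_nonneg (norm_nonneg q) _) (Dq_nonneg hm Ξ q)⟩
  have hev : ∀ᶠ q in Filter.cofinite, ε < ‖q‖ ^ ((n : ℝ) / (m : ℝ)) * Dq Ξ q :=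
    Filter.eventually_lt_of_lt_liminf hεL hbdd
  set F : Set (Fin n → ℤ) := {q | ¬ ε < ‖q‖ ^ ((n : ℝ) / (m : ℝ)) * Dq Ξ q} with hF
  have hFfin : F.Finite := Filter.eventually_cofinite.mp hev
  have hDpos : ∀ q : Fin n → ℤ, q ≠ 0 → 0 < Dq Ξ q := by
    intro q hq
    rcases eq_or_lt_of_le (Dq_nonneg hm Ξ q) with h | h
    · exfalso
      have hzero : ∀ k : ℤ, Dq Ξ (k • q) = 0 := Dq_smul_eq_zero hm Ξ q h.symm
      have hinj : Function.Injective (fun k : ℕ => ((k : ℤ) + 1) • q) := by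
        intro k l hkl
        obtain ⟨i, hi⟩ := Function.ne_iff.mp hq
        have := congrFun hkl i
        simp only [Pi.smul_apply, smul_eq_mul] at this
        have : (k : ℤ) + 1 = (l : ℤ) + 1 := mul_right_cancel₀ (by simpa using hi) this
        omega
      have hmem : ∀ k : ℕ, ((k : ℤ) + 1) • q ∈ F := by
        intro k
        rw [hF, Set.mem_setOf_eq, hzero ((k : ℤ) + 1), mul_zero]
        exact not_lt.mpr hε0.le
      exact (Set.infinite_of_injective_forall_mem hinj hmem) hFfin
    · exact h
  have hgood : ∀ q : Fin n → ℤ, q ≠ 0 → q ∉ F →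
      ε * ‖q‖ ^ (-((n : ℝ) / m)) ≤ Dq Ξ q := by
    intro q hq hqF
    have hlt : ε < ‖q‖ ^ ((n : ℝ) / (m : ℝ)) * Dq Ξ q := not_not.mp hqF
    have hqn : (0:ℝ) < ‖q‖ := lt_of_lt_of_le one_pos (one_le_norm_int_vec hq)
    have hpos : (0:ℝ) < ‖q‖ ^ ((n : ℝ) / (m : ℝ)) := Real.rpow_pos_of_pos hqn _
    have hdiv : ε / ‖q‖ ^ ((n : ℝ) / (m : ℝ)) < Dq Ξ q := by
      rw [div_lt_iff₀ hpos]
      rw [mul_comm] at hlt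
      exact hlt
    rw [Real.rpow_neg hqn.le, ← div_eq_mul_inv]
    exact hdiv.le
  have hBad : ∃ ε' : ℝ, 0 < ε' ∧ Ξ ∈ BadC n m ε' := by
    by_cases hFne : ((hFfin.toFinset).erase 0).Nonempty
    · set δ : ℝ := ((hFfin.toFinset).erase 0).inf' hFne (fun q => Dq Ξ q) with hδ
      have hδ0 : 0 < δ := by
        rw [hδ, Finset.lt_inf'_iff]
        intro q hqmem
        exact hDpos q (Finset.mem_erase.mp hqmem).1
      refine ⟨min ε δ, lt_min hε0 hδ0, ?_⟩
      intro q hq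
      by_cases hqF : q ∈ F
      · have hqmem : q ∈ (hFfin.toFinset).erase 0 :=
          Finset.mem_erase.mpr ⟨hq, hFfin.mem_toFinset.mpr hqF⟩
        have h1 : δ ≤ Dq Ξ q := Finset.inf'_le _ hqmem
        have h2 : ‖q‖ ^ (-((n : ℝ) / m)) ≤ 1 :=
          Real.rpow_le_one_of_one_le_of_nonpos (one_le_norm_int_vec hq)
            (neg_nonpos.mpr (by positivity))
        calc min ε δ * ‖q‖ ^ (-((n : ℝ) / m)) ≤ min ε δ * 1 :=
              mul_le_mul_of_nonneg_left h2 (le_min hε0.le hδ0.le)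
          _ = min ε δ := mul_one _
          _ ≤ δ := min_le_right _ _
          _ ≤ Dq Ξ q := h1
      · refine le_trans ?_ (hgood q hq hqF)
        apply mul_le_mul_of_nonneg_right (min_le_left _ _)
          (Real.rpow_nonneg (norm_nonneg q) _)
    · refine ⟨ε, hε0, ?_⟩
      intro q hq
      apply hgood q hq
      intro hqF
      exact hFne ⟨q, Finset.mem_erase.mpr ⟨hq, hFfin.mem_toFinset.mpr hqF⟩⟩
  obtain ⟨ε', hε'0, hmem⟩ := hBad
  obtain ⟨k, hk⟩ := exists_nat_one_div_lt hε'0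
  apply Set.mem_iUnion.mpr ⟨k, ?_⟩
  intro q hq
  calc 1 / ((k : ℝ) + 1) * ‖q‖ ^ (-((n : ℝ) / m))
      ≤ ε' * ‖q‖ ^ (-((n : ℝ) / m)) :=
        mul_le_mul_of_nonneg_right hk.le (Real.rpow_nonneg (norm_nonneg q) _)
    _ ≤ Dq Ξ q := hmem q hq

end Stmt18


/-- The set `Bad(n,m)` of badly approximable `n × m` real matrices,
i.e. those `Ξ` with columns `ξ₁, …, ξ_m ∈ ℝ^n` for which
`liminf_{q ∈ ℤⁿ, |q|_∞ → ∞} |q|_∞^{n/m} · min_{p ∈ ℤ^m} max_{1≤j≤m} |q·ξ_j − p_j| > 0`,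
has `nm`-dimensional Lebesgue measure zero.  (The liminf as `|q|_∞ → ∞` is taken along
the cofinite filter on `ℤⁿ`.) -/
theorem stmt18 (n m : ℕ) (hn : 1 ≤ n) (hm : 1 ≤ m) :
    volume {Ξ : Fin n → Fin m → ℝ |
      0 < Filter.liminf (fun q : Fin n → ℤ =>
            ‖q‖ ^ ((n : ℝ) / (m : ℝ)) *
              ⨅ p : Fin m → ℤ, ⨆ j : Fin m, |∑ i, (q i : ℝ) * Ξ i j - (p j : ℝ)|)
          Filter.cofinite} = 0 := by
  have hsub := Stmt18.reduction (n := n) (m := m) hn hm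
  apply measure_mono_null hsub
  apply measure_iUnion_null
  intro k
  apply Stmt18.badC_null hn hm
  · positivity
  · rw [div_le_one (by positivity)]
    have : (0:ℝ) ≤ (k:ℝ) := Nat.cast_nonneg k
    linarith
end
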